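/- arXiv:0711.1622 — 7 statements merged into one kernel-verified Lean document; each statement's English description precedes it below -/
import Mathlib

section
/- Let q be a prime power with q ≡ 3 (mod 4), let 2^(m-2) be the largest power of 2 dividing q+1, and let ξ be a primitive 2^(m-1)-th root of unity in F_{q^2} with a = ξ + ξ^q. Then the matrices x = [[0,1],[1,a]] and t = [[1,a],[0,-1]] in GL_2(F_q) satisfy x^{2^{m-1}} = 1, t^2 = 1, and t x t = x^{2^{m-2}-1}, and x has order exactly 2^{m-1}. -/
open Matrix

/-- For `q ≡ 3 (mod 4)` a prime power, `2^(m-2)` the exact power of `2` in `q+1`,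
`ξ` a primitive `2^(m-1)`-th root of unity in `F_{q^2}` and `a = ξ + ξ^q` (an element of `F_q`),
the matrices `x = [[0,1],[1,a]]`, `t = [[1,a],[0,-1]]` satisfy `x^(2^(m-1)) = 1`, `t^2 = 1`,
`t*x*t = x^(2^(m-2)-1)`, and `x` has order exactly `2^(m-1)`. -/
theorem semidihedral_generators_of_GL2
    (q m : ℕ) (hq : IsPrimePow q) (hq3 : q % 4 = 3)
    (hdvd : 2 ^ (m - 2) ∣ q + 1) (hndvd : ¬ 2 ^ (m - 1) ∣ q + 1)
    (F K : Type) [Field F] [Field K] [Fintype F] [Fintype K] [Algebra F K]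
    (hF : Fintype.card F = q) (hK : Fintype.card K = q ^ 2)
    (ξ : K) (hξ : orderOf ξ = 2 ^ (m - 1))
    (a : F) (ha : algebraMap F K a = ξ + ξ ^ q) :
    let x : Matrix (Fin 2) (Fin 2) F := !![0, 1; 1, a]
    let t : Matrix (Fin 2) (Fin 2) F := !![1, a; 0, -1]
    x ^ (2 ^ (m - 1)) = 1 ∧ t ^ 2 = 1 ∧
      t * x * t = x ^ (2 ^ (m - 2) - 1) ∧ orderOf x = 2 ^ (m - 1) := by
  intro x t
  -- m ≥ 4
  have h4 : (4 : ℕ) ∣ q + 1 := by omega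
  have hm : 4 ≤ m := by
    by_contra h
    apply hndvd
    refine dvd_trans ?_ h4
    interval_cases m <;> norm_num
  -- characteristic of F is odd
  obtain ⟨n, hrp, hcard⟩ := FiniteField.card F (ringChar F)
  have hr2 : ringChar F ≠ 2 := by
    intro h
    rw [h] at hcard
    rw [hF] at hcard
    have : 2 ∣ q := hcard ▸ dvd_pow_self 2 n.pos.ne'
    omega
  have h2F : (2 : F) ≠ 0 := by
    intro h
    have h2 : ((2 : ℕ) : F) = 0 := by exact_mod_cast h
    have hd := (CharP.cast_eq_zero_iff F (ringChar F) 2).mp h2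
    exact hr2 ((Nat.prime_dvd_prime_iff_eq hrp Nat.prime_two).mp hd)
  have hneg1F : (-1 : F) ≠ 1 := by
    intro h
    apply h2F
    linear_combination -h
  have hinj : Function.Injective (algebraMap F K) := (algebraMap F K).injective
  -- basic facts about ξ
  have hξN : ξ ^ 2 ^ (m - 1) = 1 := by rw [← hξ]; exact pow_orderOf_eq_one ξ
  have hξ0 : ξ ≠ 0 := by
    intro h
    rw [h, zero_pow (by positivity)] at hξN
    exact one_ne_zero hξN.symm
  have hξinv : ξ * ξ⁻¹ = 1 := mul_inv_cancel₀ hξ0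
  have hsplit : 2 ^ (m - 2) * 2 = 2 ^ (m - 1) := by
    rw [← pow_succ]
    congr 1
    omega
  have hη : ξ ^ 2 ^ (m - 2) = -1 := by
    set η := ξ ^ 2 ^ (m - 2) with hηdef
    have hη2 : η ^ 2 = 1 := by rw [hηdef, ← pow_mul, hsplit, hξN]
    have hη1 : η ≠ 1 := by
      intro h
      have hd := orderOf_dvd_of_pow_eq_one h
      rw [hξ] at hd
      have := (Nat.pow_dvd_pow_iff_le_right (by norm_num : 1 < 2)).mp hd
      omega
    have : (η - 1) * (η + 1) = 0 := by linear_combination hη2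
    rcases mul_eq_zero.mp this with h | h
    · exact absurd (by linear_combination h) hη1
    · linear_combination h
  -- ξ^(q+1) = -1
  obtain ⟨c, hc⟩ := hdvd
  have hcodd : Odd c := by
    rcases Nat.even_or_odd c with he | ho
    · obtain ⟨d, hd⟩ := he
      exact absurd ⟨d, by rw [hc, hd, ← hsplit]; ring⟩ hndvd
    · exact ho
  have hξq1 : ξ ^ (q + 1) = -1 := by
    rw [hc, pow_mul, hη]
    exact hcodd.neg_one_pow
  have hξq : ξ ^ q = -ξ⁻¹ := by
    have h1 : ξ ^ q * ξ = -1 := by rw [← pow_succ, hξq1]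
    calc ξ ^ q = ξ ^ q * (ξ * ξ⁻¹) := by rw [hξinv, mul_one]
      _ = (ξ ^ q * ξ) * ξ⁻¹ := by ring
      _ = -ξ⁻¹ := by rw [h1]; ring
  have hA : algebraMap F K a = ξ - ξ⁻¹ := by rw [ha, hξq]; ring
  -- the diagonalization over K
  set A : K := algebraMap F K a with hAdef
  set μ : K := -ξ⁻¹ with hμ
  have hchar1 : ξ * ξ = A * ξ + 1 := by
    rw [hA]; field_simp; ring
  have hchar2 : μ * μ = A * μ + 1 := by
    rw [hA, hμ]; field_simp; ring
  set X : Matrix (Fin 2) (Fin 2) K := !![0, 1; 1, A] with hX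
  set P : Matrix (Fin 2) (Fin 2) K := !![1, 1; ξ, μ] with hP
  have hXP : X * P = P * !![ξ, 0; 0, μ] := by
    rw [hX, hP, Matrix.mul_fin_two, Matrix.mul_fin_two]
    ext i j
    fin_cases i <;> fin_cases j <;> simp <;>
      first
        | ring1
        | linear_combination hchar1
        | linear_combination -hchar1
        | linear_combination hchar2
        | linear_combination -hchar2
  have hdiag : ∀ k : ℕ, !![ξ, 0; 0, μ] * !![ξ ^ k, 0; 0, μ ^ k]
      = !![ξ ^ (k + 1), 0; 0, μ ^ (k + 1)] := by
    intro k
    rw [Matrix.mul_fin_two]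
    ext i j
    fin_cases i <;> fin_cases j <;> simp [pow_succ] <;> ring1
  have key : ∀ k : ℕ, X ^ k * P = P * !![ξ ^ k, 0; 0, μ ^ k] := by
    intro k
    induction k with
    | zero =>
      rw [pow_zero, pow_zero, pow_zero, one_mul, ← Matrix.one_fin_two, mul_one]
    | succ k ih =>
      rw [pow_succ', mul_assoc, ih, ← mul_assoc, hXP, mul_assoc, hdiag k]
  -- P is invertible
  have hμξ : μ - ξ ≠ 0 := by
    intro h
    have h3 : (μ - ξ) * ξ = 0 := by rw [h, zero_mul]
    rw [hμ] at h3
    have h2 : ξ * ξ = -1 := by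
      have h5 : -(ξ⁻¹ * ξ) - ξ * ξ = 0 := by linear_combination h3
      rw [inv_mul_cancel₀ hξ0] at h5
      linear_combination -h5
    have h4 : ξ ^ 2 ^ 2 = 1 := by
      rw [show (2 ^ 2 : ℕ) = 2 + 2 from rfl, pow_add, pow_two, h2]
      ring
    have hd := orderOf_dvd_of_pow_eq_one h4
    rw [hξ] at hd
    have := (Nat.pow_dvd_pow_iff_le_right (by norm_num : 1 < 2)).mp hd
    omega
  have hdetP : IsUnit P.det := by
    rw [hP, Matrix.det_fin_two_of, isUnit_iff_ne_zero]
    intro h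
    exact hμξ (by linear_combination h)
  have hPP : P * P⁻¹ = 1 := Matrix.mul_nonsing_inv P hdetP
  -- evenness
  have hevN : Even (2 ^ (m - 1)) := ⟨2 ^ (m - 2), by omega⟩
  have hevh : Even (2 ^ (m - 2)) := by
    refine ⟨2 ^ (m - 3), ?_⟩
    have : 2 ^ (m - 3) * 2 = 2 ^ (m - 2) := by rw [← pow_succ]; congr 1; omega
    omega
  have hμN : μ ^ 2 ^ (m - 1) = 1 := by
    rw [hμ, hevN.neg_pow, inv_pow, hξN, inv_one]
  have hμh : μ ^ 2 ^ (m - 2) = -1 := by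
    rw [hμ, hevh.neg_pow, inv_pow, hη]
    norm_num
  have hnegK : !![(-1 : K), 0; 0, -1] = -1 := by
    have h' : (-1 : Matrix (Fin 2) (Fin 2) K) = -(!![1, 0; 0, 1]) := by
      rw [← Matrix.one_fin_two]
    rw [h']
    ext i j
    fin_cases i <;> fin_cases j <;> simp
  have hXN : X ^ 2 ^ (m - 1) = 1 := by
    have hk := key (2 ^ (m - 1))
    rw [hξN, hμN, ← Matrix.one_fin_two, mul_one] at hk
    calc X ^ 2 ^ (m - 1) = X ^ 2 ^ (m - 1) * (P * P⁻¹) := by rw [hPP, mul_one]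
      _ = (X ^ 2 ^ (m - 1) * P) * P⁻¹ := by rw [mul_assoc]
      _ = 1 := by rw [hk, hPP]
  have hXh : X ^ 2 ^ (m - 2) = -1 := by
    have hk := key (2 ^ (m - 2))
    rw [hη, hμh, hnegK, mul_neg, mul_one] at hk
    calc X ^ 2 ^ (m - 2) = X ^ 2 ^ (m - 2) * (P * P⁻¹) := by rw [hPP, mul_one]
      _ = (X ^ 2 ^ (m - 2) * P) * P⁻¹ := by rw [mul_assoc]
      _ = -(P * P⁻¹) := by rw [hk, neg_mul]
      _ = -1 := by rw [hPP]
  -- transfer to F via the injective ring hom on matrices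
  set φ : Matrix (Fin 2) (Fin 2) F →+* Matrix (Fin 2) (Fin 2) K :=
    (algebraMap F K).mapMatrix with hφ
  have hφinj : Function.Injective φ := Matrix.map_injective hinj
  have hφx : φ x = X := by
    rw [hX]
    ext i j
    fin_cases i <;> fin_cases j <;>
      simp [hφ, RingHom.mapMatrix_apply, Matrix.map_apply, x, hAdef]
  have hx1 : x ^ 2 ^ (m - 1) = 1 := by
    apply hφinj
    rw [map_pow, hφx, hXN, _root_.map_one]
  have hxh : x ^ 2 ^ (m - 2) = -1 := by
    apply hφinj
    rw [map_pow, hφx, hXh, map_neg, _root_.map_one]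
  -- the matrix statements over F
  have hneg1M : (-1 : Matrix (Fin 2) (Fin 2) F) ≠ 1 := by
    intro h
    have h0 := Matrix.ext_iff.mpr h 0 0
    simp [Matrix.neg_apply, Matrix.one_apply] at h0
    exact hneg1F (by linear_combination h0)
  refine ⟨hx1, ?_, ?_, ?_⟩
  · rw [pow_two]
    show !![(1 : F), a; 0, -1] * !![(1 : F), a; 0, -1] = 1
    rw [Matrix.mul_fin_two, Matrix.one_fin_two]
    ext i j
    fin_cases i <;> fin_cases j <;> simp
  · -- t * x * t = x ^ (2^(m-2) - 1)
    have htxt : t * x * t = !![a, -1; -1, 0] := by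
      show !![(1 : F), a; 0, -1] * !![(0 : F), 1; 1, a] * !![(1 : F), a; 0, -1]
          = !![a, -1; -1, 0]
      rw [Matrix.mul_fin_two, Matrix.mul_fin_two]
      ext i j
      fin_cases i <;> fin_cases j <;> simp <;> ring1
    have hxinv : !![-a, 1; 1, 0] * x = 1 := by
      show !![-a, 1; 1, 0] * !![(0 : F), 1; 1, a] = 1
      rw [Matrix.mul_fin_two, Matrix.one_fin_two]
      ext i j
      fin_cases i <;> fin_cases j <;> simp
    have h1 : x * !![a, -1; -1, 0] = -1 := by
      show !![(0 : F), 1; 1, a] * !![a, -1; -1, 0] = -1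
      rw [Matrix.mul_fin_two]
      have h' : (-1 : Matrix (Fin 2) (Fin 2) F) = -(!![1, 0; 0, 1]) := by
        rw [← Matrix.one_fin_two]
      rw [h']
      ext i j
      fin_cases i <;> fin_cases j <;> simp
    have h2 : x * x ^ (2 ^ (m - 2) - 1) = -1 := by
      rw [← pow_succ']
      have he : 2 ^ (m - 2) - 1 + 1 = 2 ^ (m - 2) := by
        have : 0 < 2 ^ (m - 2) := by positivity
        omega
      rw [he, hxh]
    have h12 : x * !![a, -1; -1, 0] = x * x ^ (2 ^ (m - 2) - 1) := h1.trans h2.symm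
    calc t * x * t = 1 * !![a, -1; -1, 0] := by rw [htxt, one_mul]
      _ = !![-a, 1; 1, 0] * (x * !![a, -1; -1, 0]) := by rw [← mul_assoc, hxinv]
      _ = !![-a, 1; 1, 0] * (x * x ^ (2 ^ (m - 2) - 1)) := by rw [h12]
      _ = 1 * x ^ (2 ^ (m - 2) - 1) := by rw [← mul_assoc, hxinv]
      _ = x ^ (2 ^ (m - 2) - 1) := one_mul _
  · -- orderOf x = 2^(m-1)
    have hdvd' : orderOf x ∣ 2 ^ (m - 1) := orderOf_dvd_of_pow_eq_one hx1
    obtain ⟨j, hj, hjeq⟩ := (Nat.dvd_prime_pow Nat.prime_two).mp hdvd'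
    rcases Nat.lt_or_ge j (m - 1) with hlt | hge
    · exfalso
      have hdvd'' : orderOf x ∣ 2 ^ (m - 2) := by
        rw [hjeq]
        exact pow_dvd_pow 2 (by omega)
      have := orderOf_dvd_iff_pow_eq_one.mp hdvd''
      rw [hxh] at this
      exact hneg1M this
    · rw [hjeq]
      congr 1
      omega
end

section
/- Let q be a prime power with q ≡ 1 (mod 4), and let 2^m be the largest power of 2 dividing q-1. Then the subgroup of GL_2(F_q) generated by diag(η,1), diag(1,η), and the permutation matrix [[0,1],[1,0]], where η is a primitive 2^m-th root of unity in F_q, is a Sylow 2-subgroup of GL_2(F_q) isomorphic to the wreath product C_{2^m} ≀ C_2. -/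
open Matrix

/-- The automorphism of `A × A` swapping the two factors. -/
def swapMulAut (A : Type) [CommGroup A] : MulAut (A × A) :=
  { Equiv.prodComm A A with
    map_mul' := fun _ _ => rfl }

/-- The homomorphism `C₂ →* MulAut (A × A)` sending the generator to the swap. -/
def swapHom (A : Type) [CommGroup A] : Multiplicative (ZMod 2) →* MulAut (A × A) where
  toFun g := if g.toAdd = 0 then 1 else swapMulAut A
  map_one' := by simp
  map_mul' := by
    intro a b
    fin_cases a <;> fin_cases b <;>
      simp [swapMulAut] <;> exact MulEquiv.ext fun p => rfl

/-- The wreath product `C_{2^m} ≀ C₂`. -/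
abbrev WreathC2 (m : ℕ) : Type :=
  SemidirectProduct (Multiplicative (ZMod (2 ^ m)) × Multiplicative (ZMod (2 ^ m)))
    (Multiplicative (ZMod 2)) (swapHom _)

/-- The diagonal embedding `Fˣ × Fˣ →* GL₂(F)`. -/
def diagHom (F : Type) [Field F] : Fˣ × Fˣ →* GL (Fin 2) F where
  toFun p := ⟨!![(p.1 : F), 0; 0, (p.2 : F)], !![((p.1⁻¹ : Fˣ) : F), 0; 0, ((p.2⁻¹ : Fˣ) : F)],
    by simp [Matrix.mul_fin_two, ← Units.val_mul, Matrix.one_fin_two],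
    by simp [Matrix.mul_fin_two, ← Units.val_mul, Matrix.one_fin_two]⟩
  map_one' := by ext : 1; simp [Matrix.one_fin_two]
  map_mul' p q := by ext : 1; simp [Matrix.mul_fin_two]

theorem diagHom_val (F : Type) [Field F] (p : Fˣ × Fˣ) :
    ((diagHom F p : GL (Fin 2) F) : Matrix (Fin 2) (Fin 2) F) = !![(p.1 : F), 0; 0, (p.2 : F)] :=
  rfl

/-- The hom `ZMod n →* Fˣ` (multiplicatively) sending `1` to a unit `u` with `u ^ n = 1`. -/
def zmodPow (F : Type) [Field F] (n : ℕ) (u : Fˣ) (hu : u ^ n = 1) :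
    Multiplicative (ZMod n) →* Fˣ :=
  AddMonoidHom.toMultiplicativeLeft
    (ZMod.lift n ⟨(zmultiplesHom (Additive Fˣ)) (Additive.ofMul u), by
      simp only [zmultiplesHom_apply]
      rw [← ofMul_zpow, zpow_natCast, hu, ofMul_one]⟩)

theorem zmodPow_apply (F : Type) [Field F] (n : ℕ) (u : Fˣ) (hu : u ^ n = 1) (k : ℕ) :
    zmodPow F n u hu (Multiplicative.ofAdd (k : ZMod n)) = u ^ k := by
  have : ((k : ℤ) : ZMod n) = (k : ZMod n) := by push_cast; ring
  simp only [zmodPow, AddMonoidHom.coe_toMultiplicativeLeft, Function.comp_apply, toAdd_ofAdd,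
    ← this, ZMod.lift_coe, zmultiplesHom_apply, ← ofMul_zpow, toMul_ofMul, zpow_natCast]

/-- An order-2 hom from `C₂`. -/
def c2Hom {G : Type*} [Group G] (t : G) (h : t * t = 1) : Multiplicative (ZMod 2) →* G where
  toFun g := if g.toAdd = 0 then 1 else t
  map_one' := by simp
  map_mul' a b := by
    fin_cases a <;> fin_cases b <;> simp [h, show (1 + 1 : ZMod 2) = 0 by decide] <;> rfl

/-- For `q ≡ 1 (mod 4)` a prime power with `2^m` the exact power of `2` in `q-1`
and `η` a primitive `2^m`-th root of unity in `F_q`, the subgroup of `GL₂(F_q)` generated by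
`diag(η,1)`, `diag(1,η)` and the swap permutation matrix is a Sylow `2`-subgroup of `GL₂(F_q)`
isomorphic to the wreath product `C_{2^m} ≀ C₂`. -/
theorem sylow_two_of_GL2_is_wreath
    (q m : ℕ) (hq : IsPrimePow q) (hq1 : q % 4 = 1)
    (hdvd : 2 ^ m ∣ q - 1) (hndvd : ¬ 2 ^ (m + 1) ∣ q - 1)
    (F : Type) [Field F] [Fintype F] (hF : Fintype.card F = q)
    (η : F) (hη : orderOf η = 2 ^ m)
    (x y t : GL (Fin 2) F)
    (hx : (x : Matrix (Fin 2) (Fin 2) F) = !![η, 0; 0, 1])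
    (hy : (y : Matrix (Fin 2) (Fin 2) F) = !![1, 0; 0, η])
    (ht : (t : Matrix (Fin 2) (Fin 2) F) = !![0, 1; 1, 0]) :
    (∃ P : Sylow 2 (GL (Fin 2) F), (P : Subgroup (GL (Fin 2) F)) = Subgroup.closure {x, y, t}) ∧
    Nonempty ((Subgroup.closure {x, y, t} : Subgroup (GL (Fin 2) F)) ≃* WreathC2 m) := by
  haveI : NeZero (2 ^ m) := ⟨by positivity⟩
  have hq2 : 2 ≤ q := hq.two_le
  -- the unit u with value η
  have hηpow : η ^ (2 ^ m) = 1 := by rw [← hη]; exact pow_orderOf_eq_one η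
  have hunit : IsUnit η := IsUnit.of_pow_eq_one hηpow (by positivity)
  set u : Fˣ := hunit.unit with hudef
  have hu : (u : F) = η := hunit.unit_spec
  have huord : orderOf u = 2 ^ m := by rw [← hη, ← hu, orderOf_units]
  have hupow : u ^ (2 ^ m) = 1 := by rw [← huord]; exact pow_orderOf_eq_one u
  set ψ := zmodPow F (2 ^ m) u hupow with hψdef
  set fN : (Multiplicative (ZMod (2 ^ m)) × Multiplicative (ZMod (2 ^ m))) →* GL (Fin 2) F :=
    (diagHom F).comp (ψ.prodMap ψ) with hfNdef
  have htt : t * t = 1 := by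
    ext : 1
    simp [Units.val_mul, ht, Matrix.mul_fin_two, Matrix.one_fin_two]
  have htinv : t⁻¹ = t := by
    rw [inv_eq_iff_mul_eq_one]; exact htt
  set τ := c2Hom t htt with hτdef
  have hτ1 : τ (Multiplicative.ofAdd (1 : ZMod 2)) = t := by
    simp [hτdef, c2Hom, show (Multiplicative.ofAdd (1 : ZMod 2)).toAdd ≠ 0 by decide]
  have hz2 : ∀ z : ZMod 2, z = 0 ∨ z = 1 := by decide
  have hτ0' : ∀ g : Multiplicative (ZMod 2), g.toAdd = 0 → τ g = 1 := by
    intro g hg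
    rw [show g = 1 from by rw [← ofAdd_toAdd g, hg]; rfl]
    exact map_one τ
  have hτ1' : ∀ g : Multiplicative (ZMod 2), g.toAdd = 1 → τ g = t := by
    intro g hg
    rw [show g = Multiplicative.ofAdd (1 : ZMod 2) from by rw [← ofAdd_toAdd g, hg]]
    exact hτ1
  have hfNval : ∀ p, ((fN p : GL (Fin 2) F) : Matrix (Fin 2) (Fin 2) F) =
      !![(ψ p.1 : F), 0; 0, (ψ p.2 : F)] := fun p => rfl
  have hcomp : ∀ g, fN.comp ((swapHom _) g).toMonoidHom =
      (MulAut.conj (τ g)).toMonoidHom.comp fN := by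
    intro g
    rcases hz2 g.toAdd with hg | hg
    · rw [show g = 1 from by rw [← ofAdd_toAdd g, hg]; rfl]
      ext p : 1
      simp
    · rw [show g = Multiplicative.ofAdd (1 : ZMod 2) from by rw [← ofAdd_toAdd g, hg]]
      ext p : 1
      have hsw : (swapHom (Multiplicative (ZMod (2 ^ m)))) (Multiplicative.ofAdd (1 : ZMod 2)) =
          swapMulAut _ := by
        simp [swapHom, show ((1 : ZMod 2) = 0) ↔ False by decide]
      simp only [MonoidHom.comp_apply, MulEquiv.coe_toMonoidHom, hsw, hτ1, MulAut.conj_apply]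
      ext : 1
      rw [htinv]
      simp [Units.val_mul, hfNval, ht, Matrix.mul_fin_two, swapMulAut, Equiv.prodComm]
  set φ := SemidirectProduct.lift fN τ hcomp with hφdef
  have hφ_apply : ∀ z : WreathC2 m, φ z = fN z.left * τ z.right := fun z => rfl
  -- generators in terms of φ
  have hx' : x = diagHom F (u, 1) := by
    ext : 1; rw [hx, diagHom_val]; simp [hu]
  have hy' : y = diagHom F (1, u) := by
    ext : 1; rw [hy, diagHom_val]; simp [hu]
  have hψ1 : ψ (Multiplicative.ofAdd (1 : ZMod (2 ^ m))) = u := by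
    have := zmodPow_apply F (2 ^ m) u hupow 1
    simpa using this
  have hval : ∀ a : Multiplicative (ZMod (2 ^ m)),
      a = Multiplicative.ofAdd (((a.toAdd.val : ℕ) : ZMod (2 ^ m))) := by
    intro a
    simp [ZMod.natCast_val, ZMod.cast_id']
  have hψval : ∀ a : Multiplicative (ZMod (2 ^ m)), ψ a = u ^ a.toAdd.val := by
    intro a
    conv_lhs => rw [hval a]
    exact zmodPow_apply F (2 ^ m) u hupow _
  -- injectivity of ψ
  have hψinj : ∀ a : Multiplicative (ZMod (2 ^ m)), ψ a = 1 → a = 1 := by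
    intro a ha
    have ha : u ^ a.toAdd.val = 1 := (hψval a).symm.trans ha
    have hdvd' : 2 ^ m ∣ a.toAdd.val := by
      have h := orderOf_dvd_of_pow_eq_one ha
      rwa [huord] at h
    have hlt : a.toAdd.val < 2 ^ m := ZMod.val_lt _
    have h0 : a.toAdd.val = 0 := Nat.eq_zero_of_dvd_of_lt hdvd' hlt
    exact (hval a).trans (by rw [h0]; simp)
  -- injectivity of φ
  have hinj : Function.Injective φ := by
    rw [injective_iff_map_eq_one]
    rintro ⟨⟨a, b⟩, g⟩ h1
    rw [hφ_apply] at h1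
    rcases hz2 g.toAdd with hg | hg
    · have hτg : τ g = 1 := hτ0' g hg
      rw [hτg, mul_one] at h1
      have hmat := congrArg Units.val h1
      rw [hfNval] at hmat
      have h00 : (ψ a : F) = 1 := by
        have := congrFun (congrFun hmat 0) 0
        simpa [Matrix.one_apply] using this
      have h11 : (ψ b : F) = 1 := by
        have := congrFun (congrFun hmat 1) 1
        simpa [Matrix.one_apply] using this
      have ha1 : a = 1 := hψinj a (Units.ext h00)
      have hb1 : b = 1 := hψinj b (Units.ext h11)
      have hg1 : g = 1 := by rw [← ofAdd_toAdd g, hg]; rfl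
      rw [ha1, hb1, hg1]
      rfl
    · have hτg : τ g = t := hτ1' g hg
      rw [hτg] at h1
      have hmat := congrArg (fun M : GL (Fin 2) F => (M : Matrix (Fin 2) (Fin 2) F) 0 0) h1
      simp [Units.val_mul, hfNval, ht, Matrix.mul_fin_two, Matrix.one_apply] at hmat
  -- range = closure
  have hxmem : x ∈ Subgroup.closure ({x, y, t} : Set (GL (Fin 2) F)) :=
    Subgroup.subset_closure (by simp)
  have hymem : y ∈ Subgroup.closure ({x, y, t} : Set (GL (Fin 2) F)) :=
    Subgroup.subset_closure (by simp)
  have htmem : t ∈ Subgroup.closure ({x, y, t} : Set (GL (Fin 2) F)) :=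
    Subgroup.subset_closure (by simp)
  have hdiagpow : ∀ k j : ℕ, diagHom F (u ^ k, u ^ j) = x ^ k * y ^ j := by
    intro k j
    rw [hx', hy', ← _root_.map_pow, ← _root_.map_pow, ← _root_.map_mul]
    congr 1
    simp [Prod.ext_iff]
  have hrange : φ.range = Subgroup.closure ({x, y, t} : Set (GL (Fin 2) F)) := by
    apply le_antisymm
    · rintro _ ⟨⟨⟨a, b⟩, g⟩, rfl⟩
      rw [hφ_apply]
      apply mul_mem
      · have hfNab : fN (a, b) = x ^ a.toAdd.val * y ^ b.toAdd.val := by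
          rw [← hdiagpow]
          show diagHom F (ψ a, ψ b) = _
          rw [hψval a, hψval b]
        rw [hfNab]
        exact mul_mem (pow_mem hxmem _) (pow_mem hymem _)
      · rcases hz2 g.toAdd with hg | hg
        · rw [hτ0' g hg]; exact one_mem _
        · rw [hτ1' g hg]; exact htmem
    · rw [Subgroup.closure_le]
      rintro z (rfl | rfl | rfl)
      · exact ⟨SemidirectProduct.inl (Multiplicative.ofAdd (1 : ZMod (2 ^ m)), 1), by
          rw [hφdef, SemidirectProduct.lift_inl]
          show diagHom F (ψ (Multiplicative.ofAdd (1 : ZMod (2 ^ m))), ψ 1) = _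
          rw [hψ1, _root_.map_one, ← hx']⟩
      · exact ⟨SemidirectProduct.inl (1, Multiplicative.ofAdd (1 : ZMod (2 ^ m))), by
          rw [hφdef, SemidirectProduct.lift_inl]
          show diagHom F (ψ 1, ψ (Multiplicative.ofAdd (1 : ZMod (2 ^ m)))) = _
          rw [hψ1, _root_.map_one, ← hy']⟩
      · exact ⟨SemidirectProduct.inr (Multiplicative.ofAdd (1 : ZMod 2)), by
          rw [hφdef, SemidirectProduct.lift_inr]; exact hτ1⟩
  -- the isomorphism
  have e : WreathC2 m ≃* (Subgroup.closure ({x, y, t} : Set (GL (Fin 2) F))) :=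
    (MonoidHom.ofInjective hinj).trans (MulEquiv.subgroupCongr hrange)
  -- cardinalities
  have hcardW : Nat.card (WreathC2 m) = 2 ^ (2 * m + 1) := by
    have e2 : WreathC2 m ≃ ((ZMod (2 ^ m) × ZMod (2 ^ m)) × ZMod 2) :=
      ⟨fun z => ((z.left.1.toAdd, z.left.2.toAdd), z.right.toAdd),
       fun p => ⟨(Multiplicative.ofAdd p.1.1, Multiplicative.ofAdd p.1.2),
         Multiplicative.ofAdd p.2⟩, fun _ => rfl, fun _ => rfl⟩
    rw [Nat.card_congr e2, Nat.card_prod, Nat.card_prod, Nat.card_zmod, Nat.card_zmod]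
    ring
  have hcardH : Nat.card (Subgroup.closure ({x, y, t} : Set (GL (Fin 2) F))) =
      2 ^ (2 * m + 1) := by
    exact (Nat.card_congr e.toEquiv).symm.trans hcardW
  -- card of GL and its 2-adic valuation
  have hcardGL : Nat.card (GL (Fin 2) F) = (q ^ 2 - 1) * (q ^ 2 - q) := by
    rw [Matrix.card_GL_field (𝔽 := F) 2, Fin.prod_univ_two, hF]
    norm_num
  have hfact : (Nat.card (GL (Fin 2) F)).factorization 2 = 2 * m + 1 := by
    have hle1 : 1 ≤ q := by omega
    have hle2 : q ≤ q ^ 2 := Nat.le_self_pow two_ne_zero q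
    have hle3 : 1 ≤ q ^ 2 := le_trans hle1 hle2
    have h3 : q ^ 2 - 1 = (q - 1) * (q + 1) := by zify [hle1, hle3]; ring
    have h4 : q ^ 2 - q = q * (q - 1) := by zify [hle1, hle2]; ring
    have ne1 : q - 1 ≠ 0 := by omega
    have ne2 : q + 1 ≠ 0 := by omega
    have ne3 : q ≠ 0 := by omega
    have hm1 : (q - 1).factorization 2 = m := by
      have hub : m ≤ (q - 1).factorization 2 :=
        (Nat.Prime.pow_dvd_iff_le_factorization Nat.prime_two ne1).mp hdvd
      have hlb : ¬ (m + 1 ≤ (q - 1).factorization 2) := fun h =>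
        hndvd ((Nat.Prime.pow_dvd_iff_le_factorization Nat.prime_two ne1).mpr h)
      omega
    have hp1 : (q + 1).factorization 2 = 1 := by
      have hub : 1 ≤ (q + 1).factorization 2 :=
        (Nat.Prime.pow_dvd_iff_le_factorization Nat.prime_two ne2).mp (by
          rw [pow_one]; omega)
      have hlb : ¬ (2 ≤ (q + 1).factorization 2) := fun h =>
        (by omega : ¬ (4 ∣ q + 1)) (by
          have := (Nat.Prime.pow_dvd_iff_le_factorization Nat.prime_two ne2).mpr h
          norm_num at this
          exact this)
      omega
    have hq0 : (q : ℕ).factorization 2 = 0 :=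
      Nat.factorization_eq_zero_of_not_dvd (by omega)
    rw [hcardGL, h3, h4,
      Nat.factorization_mul (mul_ne_zero ne1 ne2) (mul_ne_zero ne3 ne1),
      Nat.factorization_mul ne1 ne2, Nat.factorization_mul ne3 ne1]
    simp only [Finsupp.add_apply, hm1, hp1, hq0]
    omega
  haveI : Fact (Nat.Prime 2) := ⟨Nat.prime_two⟩
  refine ⟨⟨Sylow.ofCard (Subgroup.closure {x, y, t}) (by rw [hcardH, hfact]), rfl⟩, ⟨e.symm⟩⟩
end

section
/- For m ≥ 3, the automorphism group of the semidihedral group SD_{2^m} is a 2-group. -/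
section Aux

lemma sd_aut_eq_one_of_fix {G : Type} [Group G] (x t : G)
    (hgen : Subgroup.closure {x, t} = (⊤ : Subgroup G))
    (φ : MulAut G) (hfx : φ x = x) (hft : φ t = t) : φ = 1 := by
  ext g
  have hg : g ∈ Subgroup.closure {x, t} := by rw [hgen]; trivial
  induction hg using Subgroup.closure_induction with
  | mem a ha => rcases ha with rfl | rfl <;> simpa
  | one => simp
  | mul a b _ _ ha hb => simp [map_mul, ha, hb]
  | inv a _ ha => simp [map_inv, ha]

lemma sd_odd_aut_eq_one
    (m : ℕ) (hm : 3 ≤ m)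
    (G : Type) [Group G] (x t : G)
    (hx : orderOf x = 2 ^ (m - 1)) (ht : t ^ 2 = 1)
    (hrel : t * x * t = x ^ (2 ^ (m - 2) - 1))
    (hgen : Subgroup.closure {x, t} = (⊤ : Subgroup G))
    (hcard : Nat.card G = 2 ^ m)
    (ψ : MulAut G) (hodd : Odd (orderOf ψ)) : ψ = 1 := by
  -- basic facts
  have htt : t * t = 1 := by rw [← sq]; exact ht
  have hti : t⁻¹ = t := inv_eq_of_mul_eq_one_right htt
  set S : ℤ := (2:ℤ) ^ (m-2) - 1 with hS
  have hrel' : t * x * t⁻¹ = x ^ S := by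
    rw [hti, hrel, ← zpow_natCast]
    congr 1
    have h1 : (1:ℕ) ≤ 2 ^ (m-2) := Nat.one_le_two_pow
    push_cast [h1]
    ring
  have hconj : ∀ i : ℤ, t * x ^ i * t = x ^ (S * i) := by
    intro i
    calc t * x ^ i * t = (t * x * t⁻¹) ^ i := by rw [conj_zpow, hti]
    _ = (x ^ S) ^ i := by rw [hrel']
    _ = x ^ (S * i) := by rw [← zpow_mul]
  have hxone : ∀ i : ℤ, x ^ i = 1 ↔ ((2:ℤ) ^ (m-1)) ∣ i := by
    intro i
    rw [← orderOf_dvd_iff_zpow_eq_one, hx]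
    push_cast
    rfl
  have hdecomp : ∀ g : G, ∃ i : ℤ, g = x ^ i ∨ g = x ^ i * t := by
    intro g
    have hg : g ∈ Subgroup.closure {x, t} := by rw [hgen]; trivial
    induction hg using Subgroup.closure_induction with
    | mem a ha =>
      rcases ha with rfl | rfl
      · exact ⟨1, Or.inl (zpow_one _).symm⟩
      · exact ⟨0, Or.inr (by simp)⟩
    | one => exact ⟨0, Or.inl (by simp)⟩
    | mul a b _ _ ha hb =>
      obtain ⟨i, rfl | rfl⟩ := ha <;> obtain ⟨j, rfl | rfl⟩ := hb
      · exact ⟨i + j, Or.inl (zpow_add x i j).symm⟩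
      · exact ⟨i + j, Or.inr (by rw [← mul_assoc, ← zpow_add])⟩
      · refine ⟨i + S * j, Or.inr ?_⟩
        calc x ^ i * t * x ^ j = x ^ i * (t * x ^ j * t) * t := by
              simp [mul_assoc, htt]
        _ = x ^ (i + S * j) * t := by rw [hconj, ← zpow_add]
      · refine ⟨i + S * j, Or.inl ?_⟩
        calc x ^ i * t * (x ^ j * t) = x ^ i * (t * x ^ j * t) := by group
        _ = x ^ (i + S * j) := by rw [hconj, ← zpow_add]
    | inv a _ ha =>
      obtain ⟨i, rfl | rfl⟩ := ha
      · exact ⟨-i, Or.inl (zpow_neg x i).symm⟩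
      · refine ⟨S * (-i), Or.inr ?_⟩
        have h2 : (x ^ i * t)⁻¹ = t * x ^ (-i) * (t * t) := by
          rw [htt, mul_one, mul_inv_rev, hti, ← zpow_neg]
        rw [h2, ← mul_assoc, hconj]
  have htC : t ∉ Subgroup.zpowers x := by
    intro hmem
    have htop : (⊤ : Subgroup G) ≤ Subgroup.zpowers x := by
      rw [← hgen]
      apply (Subgroup.closure_le _).mpr
      rintro a (rfl | rfl)
      · exact Subgroup.mem_zpowers _
      · exact hmem
    have heq : Subgroup.zpowers x = (⊤ : Subgroup G) := le_antisymm le_top htop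
    have hc1 : Nat.card (Subgroup.zpowers x) = 2 ^ (m - 1) := by
      rw [Nat.card_zpowers, hx]
    rw [heq, Subgroup.card_top, hcard] at hc1
    have := Nat.pow_right_injective (le_refl 2) hc1
    omega
  -- the order of ψ
  set q : ℕ := orderOf ψ with hq
  have hq0 : q ≠ 0 := by
    rcases hodd with ⟨c, hc⟩; omega
  have hψq : ψ ^ q = 1 := pow_orderOf_eq_one ψ
  have happly : ∀ (n : ℕ) (g : G), (ψ ^ (n+1)) g = (ψ ^ n) (ψ g) := by
    intro n g
    rw [pow_succ, MulAut.mul_apply]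
  have hqcop : Nat.Coprime 2 q := by
    rw [Nat.prime_two.coprime_iff_not_dvd]
    rw [Nat.odd_iff] at hodd
    omega
  -- case analysis on ψ x
  obtain ⟨i, hi | hi⟩ := hdecomp (ψ x)
  · -- ψ x = x ^ i
    have hpow : ∀ n : ℕ, (ψ ^ n) x = x ^ (i ^ n) := by
      intro n
      induction n with
      | zero => simp
      | succ n ih =>
        rw [happly, hi, map_zpow, ih, ← zpow_mul, pow_succ, mul_comm (i^n) i]
    have hxq : x ^ (i ^ q) = x := by
      have h1 : (ψ ^ q) x = x := by rw [hψq]; rfl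
      rw [hpow q] at h1
      exact h1
    have hdvd : ((2:ℤ) ^ (m-1)) ∣ i ^ q - 1 := by
      rw [← hxone]
      rw [zpow_sub, hxq, zpow_one, mul_inv_cancel]
    haveI : NeZero (2 ^ (m-1) : ℕ) := ⟨by positivity⟩
    set N : ℕ := 2 ^ (m-1) with hN
    have hNc : ((N:ℤ)) = (2:ℤ) ^ (m-1) := by rw [hN]; push_cast; rfl
    have hu : ((i : ZMod N)) ^ q = 1 := by
      have h2 : (((i ^ q - 1 : ℤ)) : ZMod N) = 0 :=
        (ZMod.intCast_zmod_eq_zero_iff_dvd _ N).mpr (by rw [hNc]; exact hdvd)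
      push_cast at h2
      linear_combination h2
    have hunit : IsUnit ((i : ZMod N)) := IsUnit.of_pow_eq_one hu hq0
    set u : (ZMod N)ˣ := hunit.unit with hu'
    have huq : u ^ q = 1 := by
      apply Units.ext
      push_cast
      rw [hunit.unit_spec, hu]
    have ho1 : orderOf u ∣ q := orderOf_dvd_of_pow_eq_one huq
    have ho2 : orderOf u ∣ 2 ^ (m-2) := by
      have h3 := orderOf_dvd_card (x := u)
      rw [ZMod.card_units_eq_totient] at h3
      rw [show N.totient = 2 ^ (m-2) by
        rw [hN, Nat.totient_prime_pow Nat.prime_two (show 0 < m - 1 by omega)]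
        rw [show m - 1 - 1 = m - 2 by omega]; ring] at h3
      exact h3
    have hcop : Nat.Coprime (2 ^ (m-2)) q := Nat.Coprime.pow_left _ hqcop
    have huone : u = 1 := by
      have h4 : orderOf u ∣ Nat.gcd (2 ^ (m-2)) q := Nat.dvd_gcd ho2 ho1
      rw [hcop] at h4
      rw [← orderOf_eq_one_iff]
      exact Nat.dvd_one.mp h4
    have hizmod : ((i : ZMod N)) = 1 := by
      rw [← hunit.unit_spec, ← hu', huone, Units.val_one]
    have hidvd : ((2:ℤ) ^ (m-1)) ∣ i - 1 := by
      rw [← hNc]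
      apply (ZMod.intCast_zmod_eq_zero_iff_dvd _ N).mp
      push_cast
      rw [hizmod]
      ring
    have hψx : ψ x = x := by
      rw [hi, show i = 1 + (i - 1) by ring, zpow_add, zpow_one,
        (hxone _).mpr hidvd, mul_one]
    obtain ⟨k, hk | hk⟩ := hdecomp (ψ t)
    · exfalso
      obtain ⟨g, hg⟩ := ψ.surjective t
      obtain ⟨a, rfl | rfl⟩ := hdecomp g
      · apply htC
        rw [← hg, map_zpow, hψx]
        exact Subgroup.zpow_mem _ (Subgroup.mem_zpowers x) a
      · apply htC
        rw [← hg, map_mul, map_zpow, hψx, hk, ← zpow_add]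
        exact Subgroup.zpow_mem _ (Subgroup.mem_zpowers x) _
    · have hxfix : ∀ n : ℕ, (ψ ^ n) x = x := by
        intro n
        induction n with
        | zero => rfl
        | succ n ih => rw [happly, hψx, ih]
      have hpow2 : ∀ n : ℕ, (ψ ^ n) t = x ^ ((n : ℤ) * k) * t := by
        intro n
        induction n with
        | zero => simp
        | succ n ih =>
          rw [happly, hk, map_mul, map_zpow]
          have h2 := hxfix n
          rw [h2, ih, ← mul_assoc, ← zpow_add]
          congr 2
          push_cast
          ring
      have h5 : x ^ ((q : ℤ) * k) * t = t := by
        have h6 : (ψ ^ q) t = t := by rw [hψq]; rfl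
        rw [hpow2 q] at h6
        exact h6
      have h7 : x ^ ((q : ℤ) * k) = 1 := by
        have h8 : x ^ ((q : ℤ) * k) * t = 1 * t := by rw [h5, one_mul]
        exact mul_right_cancel h8
      have h8 : ((2:ℤ) ^ (m-1)) ∣ (q : ℤ) * k := (hxone _).mp h7
      have hcop2 : IsCoprime ((2:ℤ) ^ (m-1)) (q : ℤ) := by
        rw [Int.isCoprime_iff_gcd_eq_one]
        have h9 : ((2:ℤ) ^ (m-1)) = ((2 ^ (m-1) : ℕ) : ℤ) := by push_cast; rfl
        rw [h9, Int.gcd_natCast_natCast]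
        exact Nat.Coprime.pow_left _ hqcop
      have h9 : ((2:ℤ) ^ (m-1)) ∣ k := hcop2.dvd_of_dvd_mul_left h8
      have hψt : ψ t = t := by
        rw [hk, (hxone _).mpr h9, one_mul]
      exact sd_aut_eq_one_of_fix x t hgen ψ hψx hψt
  · -- ψ x = x ^ i * t : this forces m = 3
    have hordψx : orderOf (ψ x) = 2 ^ (m-1) := by
      rw [← hx]
      exact orderOf_injective ψ.toMonoidHom ψ.injective x
    have hsq : ψ x * ψ x = x ^ (i + S * i) := by
      rw [hi]
      calc x ^ i * t * (x ^ i * t) = x ^ i * (t * x ^ i * t) := by group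
      _ = x ^ (i + S * i) := by rw [hconj, ← zpow_add]
    have hp2 : (2:ℤ) ^ (m-1) = 2 ^ (m-2) * 2 := by
      rw [← pow_succ]
      congr 1
      omega
    have h4 : (ψ x) ^ (4:ℕ) = 1 := by
      have e : (ψ x) ^ (4:ℕ) = (ψ x * ψ x) * (ψ x * ψ x) := by
        rw [show (4:ℕ) = 2 + 2 from rfl, pow_add, pow_two]
      rw [e, hsq, ← zpow_add, hxone]
      exact ⟨i, by rw [hS, hp2]; ring⟩
    have hdvd4 : (2:ℕ) ^ (m-1) ∣ 4 := hordψx ▸ orderOf_dvd_of_pow_eq_one h4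
    have hm3 : m = 3 := by
      have h5 : (2:ℕ) ^ (m-1) ∣ 2 ^ 2 := by norm_num at hdvd4 ⊢; exact hdvd4
      have := (Nat.pow_dvd_pow_iff_le_right (by norm_num : (1:ℕ) < 2)).mp h5
      omega
    subst hm3
    have hS1 : S = 1 := by rw [hS]; norm_num
    have hx4 : ∀ j : ℤ, x ^ j = 1 ↔ (4:ℤ) ∣ j := by
      intro j
      rw [hxone]
      norm_num
    have hcj : ∀ j : ℤ, t * x ^ j * t = x ^ j := by
      intro j
      rw [hconj, hS1, one_mul]
    have hswap : ∀ j : ℤ, t * x ^ j = x ^ j * t := by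
      intro j
      calc t * x ^ j = t * x ^ j * (t * t) := by rw [htt, mul_one]
      _ = (t * x ^ j * t) * t := by group
      _ = x ^ j * t := by rw [hcj]
    have hCxt : Commute x t := by
      have h6 := hswap 1
      rw [zpow_one] at h6
      exact h6.symm
    have ht2z : t ^ (2:ℤ) = 1 := by
      rw [show (2:ℤ) = ((2:ℕ):ℤ) from rfl, zpow_natCast, ht]
    have htz : ∀ c : ℤ, t ^ (2*c) = 1 := by
      intro c
      rw [zpow_mul, ht2z, one_zpow]
    have htoddz : ∀ c : ℤ, t ^ (2*c+1) = t := by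
      intro c
      rw [zpow_add, htz, one_mul, zpow_one]
    have hsq' : ψ x * ψ x = x ^ (2*i) := by
      rw [hsq, show i + S * i = 2*i by rw [hS1]; ring]
    have hiodd : ¬ (2:ℤ) ∣ i := by
      intro h2i
      have e1 : (ψ x) ^ (2:ℕ) = 1 := by
        rw [pow_two, hsq', (hx4 _).mpr (by omega)]
      have e2 := orderOf_dvd_of_pow_eq_one e1
      rw [hordψx] at e2
      norm_num at e2
      
    obtain ⟨b, hb⟩ : ∃ b, i = 2*b+1 := ⟨(i-1)/2, by omega⟩
    have hmul2 : ∀ a c : ℤ, (x^a*t)*(x^c*t) = x^(a+c) := by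
      intro a c
      calc (x^a*t)*(x^c*t) = x^a*(t*x^c*t) := by group
      _ = x^(a+c) := by rw [hcj, ← zpow_add]
    have hpz : ∀ n : ℤ, (x^i*t)^n = x^(i*n) * t^n := by
      intro n
      rw [(hCxt.zpow_left i).mul_zpow, ← zpow_mul]
    -- ψ t
    obtain ⟨k, hk | hk⟩ := hdecomp (ψ t)
    · -- ψ t = x ^ k : impossible
      exfalso
      have hψt2 : x ^ (k+k) = 1 := by
        rw [zpow_add, ← hk, ← map_mul, htt, map_one]
      have hk2 : (2:ℤ) ∣ k := by
        have := (hx4 _).mp hψt2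
        omega
      rcases (show (4:ℤ) ∣ k ∨ (4:ℤ) ∣ k - 2 by omega) with h42 | h42
      · have ht1 : t = 1 := by
          apply ψ.injective
          rw [hk, (hx4 _).mpr h42, map_one]
        exact htC (by rw [ht1]; exact Subgroup.one_mem _)
      · have e1 : ψ t = x ^ (2:ℤ) := by
          rw [hk, show k = 2 + (k-2) by ring, zpow_add, (hx4 (k-2)).mpr h42, mul_one]
        have e2 : ψ (x ^ (2:ℤ)) = x ^ (2:ℤ) := by
          have e3 : ψ (x ^ (2:ℤ)) = ψ x * ψ x := by
            rw [map_zpow, show (2:ℤ) = ((2:ℕ):ℤ) from rfl, zpow_natCast, pow_two]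
          rw [e3, hsq', show 2*i = 2 + (2*i - 2) by ring, zpow_add,
            (hx4 (2*i-2)).mpr (by omega), mul_one]
        have e4 : t = x ^ (2:ℤ) := ψ.injective (by rw [e1, e2])
        exact htC (by rw [e4]; exact Subgroup.zpow_mem _ (Subgroup.mem_zpowers x) _)
    · -- ψ t = x ^ k * t
      have hψt2 : x ^ (k+k) = 1 := by
        rw [← hmul2, ← hk, ← map_mul, htt, map_one]
      have hk2 : (2:ℤ) ∣ k := by
        have := (hx4 _).mp hψt2
        omega
      obtain ⟨a, ha⟩ := hk2
      -- ψ² x and ψ² t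
      have hψ2x : ψ (ψ x) = x ^ (i*i + k) := by
        rw [hi, map_mul, map_zpow, hi, hk, hpz, hb, htoddz, ← hb, hmul2]
      
      have hψ2t : ψ (ψ t) = t := by
        have h44 : (4:ℤ) ∣ i*k + k := ⟨a*b+a, by rw [ha, hb]; ring⟩
        rw [hk, map_mul, map_zpow, hi, hk, hpz, show t^k = 1 by rw [ha, htz],
          mul_one, ← mul_assoc, ← zpow_add, (hx4 (i*k+k)).mpr h44, one_mul]
      have hψ2z : ∀ j : ℤ, ψ (ψ (x ^ j)) = x ^ ((i*i+k)*j) := by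
        intro j
        rw [map_zpow, map_zpow, hψ2x, ← zpow_mul]
      obtain ⟨c, hc⟩ : ∃ c, i*i + k = 2*c+1 := ⟨2*b*b+2*b+a, by rw [ha, hb]; ring⟩
      have hψ4x : ψ (ψ (ψ (ψ x))) = x := by
        rw [hψ2x, hψ2z, show (i*i+k)*(i*i+k) = 1 + ((i*i+k)*(i*i+k) - 1) by ring,
          zpow_add, zpow_one]
        have h45 : (4:ℤ) ∣ (i*i+k)*(i*i+k) - 1 := ⟨c*c+c, by rw [hc]; ring⟩
        rw [(hx4 ((i*i+k)*(i*i+k) - 1)).mpr h45, mul_one]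
      have hψ4t : ψ (ψ (ψ (ψ t))) = t := by
        rw [hψ2t, hψ2t]
      have hpow4 : ∀ g : G, (ψ ^ (4:ℕ)) g = ψ (ψ (ψ (ψ g))) := by
        intro g
        rw [show (4:ℕ) = 3+1 from rfl, pow_succ, pow_succ, pow_succ, pow_one]
        simp [MulAut.mul_apply]
      have hψ41 : ψ ^ (4:ℕ) = 1 :=
        sd_aut_eq_one_of_fix x t hgen (ψ ^ (4:ℕ))
          (by rw [hpow4]; exact hψ4x) (by rw [hpow4]; exact hψ4t)
      have hqd4 : q ∣ 2 ^ 2 := by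
        have := orderOf_dvd_of_pow_eq_one hψ41
        norm_num at this ⊢
        exact this
      obtain ⟨j, hj2, hjq⟩ := (Nat.dvd_prime_pow Nat.prime_two).mp hqd4
      have hj0 : j = 0 := by
        by_contra hj
        have : (2:ℕ) ∣ 2 ^ j := dvd_pow_self 2 (by omega)
        rw [Nat.odd_iff] at hodd
        omega
      rw [← orderOf_eq_one_iff, ← hq, hjq, hj0, pow_zero]

end Aux

/-- For `m ≥ 3`, the automorphism group of the semidihedral group `SD_{2^m}`
(a group of order `2^m` with generators `x, t` satisfying the semidihedral relations)
is a `2`-group. -/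
theorem aut_semidihedral_two_group
    (m : ℕ) (hm : 3 ≤ m)
    (G : Type) [Group G] (x t : G)
    (hx : orderOf x = 2 ^ (m - 1)) (ht : t ^ 2 = 1)
    (hrel : t * x * t = x ^ (2 ^ (m - 2) - 1))
    (hgen : Subgroup.closure {x, t} = (⊤ : Subgroup G))
    (hcard : Nat.card G = 2 ^ m) :
    IsPGroup 2 (MulAut G) := by
  haveI : Finite G := Nat.finite_of_card_ne_zero (by rw [hcard]; positivity)
  haveI : Finite (MulAut G) :=
    Finite.of_injective (fun ψ : MulAut G => (ψ : G → G))
      (fun a b h => by ext g; exact congrFun h g)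
  intro φ
  refine ⟨(orderOf φ).factorization 2, ?_⟩
  have hn0 : orderOf φ ≠ 0 := (orderOf_pos φ).ne'
  have hψodd : Odd (orderOf (φ ^ (2 ^ (orderOf φ).factorization 2))) := by
    rw [orderOf_pow, Nat.gcd_eq_right (Nat.ordProj_dvd (orderOf φ) 2)]
    rw [Nat.odd_iff]
    have h := Nat.not_dvd_ordCompl Nat.prime_two hn0
    omega
  exact sd_odd_aut_eq_one m hm G x t hx ht hrel hgen hcard _ hψodd
end

section
/- The group algebra k[S_3] over an algebraically closed field k of characteristic 2 is isomorphic as a k-algebra to k[C_2] × M_2(k). -/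
def sAux : Fin 3 → Fin 2 → ZMod 2 := ![![0,0], ![1,0], ![1,1]]

def fM (g : Equiv.Perm (Fin 3)) : Matrix (Fin 2) (Fin 2) (ZMod 2) :=
  Matrix.of fun r j => sAux (g j.castSucc) r + sAux (g j.succ) r

lemma fM_one : fM 1 = 1 := by decide
lemma fM_mul : ∀ g h : Equiv.Perm (Fin 3), fM (g * h) = fM g * fM h := by decide

def sg (g : Equiv.Perm (Fin 3)) : Multiplicative (ZMod 2) :=
  Multiplicative.ofAdd (if Equiv.Perm.sign g = 1 then 0 else 1)

lemma sg_one : sg 1 = 1 := by decide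
lemma sg_mul : ∀ g h : Equiv.Perm (Fin 3), sg (g * h) = sg g * sg h := by decide

variable (k : Type) [Field k] [CharP k 2]

noncomputable def phi : Equiv.Perm (Fin 3) →*
    (MonoidAlgebra k (Multiplicative (ZMod 2)) × Matrix (Fin 2) (Fin 2) k) where
  toFun g := (MonoidAlgebra.single (sg g) 1, (ZMod.castHom dvd_rfl k).mapMatrix (fM g))
  map_one' := by
    refine Prod.ext ?_ ?_
    · simp [sg_one, MonoidAlgebra.one_def]
    · simp [fM_one]
  map_mul' g h := by
    refine Prod.ext ?_ ?_
    · simp [sg_mul, MonoidAlgebra.single_mul_single]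
    · simp [fM_mul]

noncomputable def Phi : MonoidAlgebra k (Equiv.Perm (Fin 3)) →ₐ[k]
    (MonoidAlgebra k (Multiplicative (ZMod 2)) × Matrix (Fin 2) (Fin 2) k) :=
  MonoidAlgebra.lift k _ _ (phi k)

example (x : MonoidAlgebra k (Equiv.Perm (Fin 3))) :
    Phi k x = ∑ g, x.coeff g • phi k g := by
  rw [Phi, MonoidAlgebra.lift_apply]
  exact Finsupp.sum_fintype _ _ (by intro g; simp)

def cc : Equiv.Perm (Fin 3) := finRotate 3
def tt : Equiv.Perm (Fin 3) := Equiv.swap 0 1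

lemma sum_perm3 {M : Type*} [AddCommMonoid M] (F : Equiv.Perm (Fin 3) → M) :
    ∑ g, F g = F 1 + F cc + F (cc*cc) + F tt + F (tt*cc) + F (tt*cc*cc) := by
  rw [show (Finset.univ : Finset (Equiv.Perm (Fin 3)))
      = {1, cc, cc*cc, tt, tt*cc, tt*cc*cc} by decide]
  rw [Finset.sum_insert (by decide), Finset.sum_insert (by decide),
    Finset.sum_insert (by decide), Finset.sum_insert (by decide),
    Finset.sum_pair (by decide)]
  simp only [add_assoc]

lemma sg_vals : sg 1 = Multiplicative.ofAdd (0:ZMod 2) ∧ sg cc = Multiplicative.ofAdd (0:ZMod 2)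
    ∧ sg (cc*cc) = Multiplicative.ofAdd (0:ZMod 2) ∧ sg tt = Multiplicative.ofAdd (1:ZMod 2)
    ∧ sg (tt*cc) = Multiplicative.ofAdd (1:ZMod 2)
    ∧ sg (tt*cc*cc) = Multiplicative.ofAdd (1:ZMod 2) := by decide

lemma fM_vals : fM 1 = !![1,0;0,1] ∧ fM cc = !![0,1;1,1] ∧ fM (cc*cc) = !![1,1;1,0]
    ∧ fM tt = !![1,1;0,1] ∧ fM (tt*cc) = !![1,0;1,1] ∧ fM (tt*cc*cc) = !![0,1;1,0] := by decide

lemma Phi_inj : Function.Injective (Phi k) := by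
  rw [injective_iff_map_eq_zero]
  intro x hx
  have hexp : Phi k x = ∑ g, x.coeff g • phi k g := by
    rw [Phi, MonoidAlgebra.lift_apply]
    exact Finsupp.sum_fintype _ _ (by intro g; simp)
  rw [hexp, sum_perm3 (fun g => x.coeff g • phi k g)] at hx
  obtain ⟨s1, s2, s3, s4, s5, s6⟩ := sg_vals
  obtain ⟨f1, f2, f3, f4, f5, f6⟩ := fM_vals
  have two : (2:k) = 0 := by
    have := CharP.cast_eq_zero k 2; push_cast at this; exact this
  have hx1 := congrArg (fun p => p.1.coeff) hx
  simp only [phi, MonoidHom.coe_mk, OneHom.coe_mk, Prod.fst_add, Prod.smul_fst,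
    MonoidAlgebra.coeff_add, MonoidAlgebra.coeff_smul, MonoidAlgebra.coeff_single,
    MonoidAlgebra.coeff_zero,
    s1, s2, s3, s4, s5, s6, Finsupp.smul_single, smul_eq_mul, mul_one,
    Prod.fst_zero] at hx1
  have hx1' : (x.coeff 1 • Finsupp.single (Multiplicative.ofAdd (0:ZMod 2)) (1:k)
      + x.coeff cc • Finsupp.single (Multiplicative.ofAdd (0:ZMod 2)) (1:k)
      + x.coeff (cc*cc) • Finsupp.single (Multiplicative.ofAdd (0:ZMod 2)) (1:k)
      + x.coeff tt • Finsupp.single (Multiplicative.ofAdd (1:ZMod 2)) (1:k)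
      + x.coeff (tt*cc) • Finsupp.single (Multiplicative.ofAdd (1:ZMod 2)) (1:k)
      + x.coeff (tt*cc*cc) • Finsupp.single (Multiplicative.ofAdd (1:ZMod 2)) (1:k)
      : Multiplicative (ZMod 2) →₀ k) = 0 := by
    simpa only [Finsupp.smul_single, smul_eq_mul, mul_one] using hx1
  have e0 := congrArg (fun p => p (Multiplicative.ofAdd (0 : ZMod 2))) hx1'
  have e1 := congrArg (fun p => p (Multiplicative.ofAdd (1 : ZMod 2))) hx1'
  simp only [Finsupp.coe_add, Pi.add_apply, Finsupp.coe_smul, Pi.smul_apply,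
    Finsupp.single_apply, Finsupp.coe_zero, Pi.zero_apply, smul_eq_mul] at e0 e1
  norm_num [show ((Multiplicative.ofAdd (1:ZMod 2)) = Multiplicative.ofAdd (0:ZMod 2)) = False
      by decide,
    show ((Multiplicative.ofAdd (0:ZMod 2)) = Multiplicative.ofAdd (1:ZMod 2)) = False
      by decide,
    show (((1:Multiplicative (ZMod 2))) = Multiplicative.ofAdd 1) = False by decide,
    show ((Multiplicative.ofAdd (1:ZMod 2)) = (1:Multiplicative (ZMod 2))) = False
      by decide] at e0 e1
  have e2 := congrArg (fun p => p.2 0 0) hx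
  have e3 := congrArg (fun p => p.2 0 1) hx
  have e4 := congrArg (fun p => p.2 1 0) hx
  have e5 := congrArg (fun p => p.2 1 1) hx
  simp only [phi, MonoidHom.coe_mk, OneHom.coe_mk, Prod.snd_add, Prod.smul_snd,
    f1, f2, f3, f4, f5, f6, Matrix.add_apply, Matrix.smul_apply,
    RingHom.mapMatrix_apply, Matrix.map_apply, Prod.snd_zero,
    Matrix.zero_apply, smul_eq_mul] at e2 e3 e4 e5
  norm_num [Matrix.cons_val_zero, Matrix.cons_val_one, Matrix.head_cons] at e2 e3 e4 e5
  refine MonoidAlgebra.ext (Finsupp.ext fun g => ?_)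
  have hg : g = 1 ∨ g = cc ∨ g = cc*cc ∨ g = tt ∨ g = tt*cc ∨ g = tt*cc*cc := by
    revert g; decide
  simp only [MonoidAlgebra.coeff_zero, Finsupp.coe_zero, Pi.zero_apply]
  rcases hg with h|h|h|h|h|h <;> subst h
  · linear_combination e0 + e2 + e5 - (x.coeff 1 + x.coeff cc + x.coeff (cc*cc) + x.coeff tt + x.coeff (tt*cc)) * two
  · linear_combination e0 + e2 + e3 + e4
      - (x.coeff 1 + x.coeff cc + 2*x.coeff (cc*cc) + x.coeff tt + x.coeff (tt*cc) + x.coeff (tt*cc*cc)) * two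
  · linear_combination e0 + e3 + e4 + e5
      - (x.coeff 1 + 2*x.coeff cc + x.coeff (cc*cc) + x.coeff tt + x.coeff (tt*cc) + x.coeff (tt*cc*cc)) * two
  · linear_combination e1 + e2 + e4 + e5
      - (x.coeff 1 + x.coeff cc + x.coeff (cc*cc) + x.coeff tt + 2*x.coeff (tt*cc) + x.coeff (tt*cc*cc)) * two
  · linear_combination e1 + e2 + e3 + e5
      - (x.coeff 1 + x.coeff cc + x.coeff (cc*cc) + 2*x.coeff tt + x.coeff (tt*cc) + x.coeff (tt*cc*cc)) * two
  · linear_combination e1 + e3 + e4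
      - (x.coeff cc + x.coeff (cc*cc) + x.coeff tt + x.coeff (tt*cc) + x.coeff (tt*cc*cc)) * two

lemma Phi_bij : Function.Bijective (Phi k) := by
  haveI i1 : Module.Finite k (MonoidAlgebra k (Equiv.Perm (Fin 3))) :=
    Module.Finite.equiv (MonoidAlgebra.coeffLinearEquiv k).symm
  haveI i2 : Module.Finite k (MonoidAlgebra k (Multiplicative (ZMod 2))) :=
    Module.Finite.equiv (MonoidAlgebra.coeffLinearEquiv k).symm
  refine ⟨Phi_inj k, ?_⟩
  have h : Module.finrank k (MonoidAlgebra k (Equiv.Perm (Fin 3)))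
      = Module.finrank k (MonoidAlgebra k (Multiplicative (ZMod 2))
        × Matrix (Fin 2) (Fin 2) k) := by
    have h1 : Module.finrank k (MonoidAlgebra k (Equiv.Perm (Fin 3))) = 6 := by
      rw [show Module.finrank k (MonoidAlgebra k (Equiv.Perm (Fin 3)))
        = Module.finrank k (Equiv.Perm (Fin 3) →₀ k) from (MonoidAlgebra.coeffLinearEquiv k).finrank_eq,
        Module.finrank_finsupp_self, Fintype.card_perm]
      norm_num [Nat.factorial]
    have h2 : Module.finrank k (MonoidAlgebra k (Multiplicative (ZMod 2))) = 2 := by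
      rw [show Module.finrank k (MonoidAlgebra k (Multiplicative (ZMod 2)))
        = Module.finrank k (Multiplicative (ZMod 2) →₀ k) from (MonoidAlgebra.coeffLinearEquiv k).finrank_eq,
        Module.finrank_finsupp_self]
      simp [Fintype.card_multiplicative]
    rw [h1, Module.finrank_prod, h2, Module.finrank_matrix]
    simp
  exact (LinearMap.injective_iff_surjective_of_finrank_eq_finrank
    (f := (Phi k).toLinearMap) h).mp (Phi_inj k)

/-- Over an algebraically closed field `k` of characteristic `2`, the group
algebra `k[S₃]` is isomorphic as a `k`-algebra to `k[C₂] × M₂(k)`. -/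
theorem group_algebra_S3_char_two
    (k : Type) [Field k] [IsAlgClosed k] (hchar : ringChar k = 2) :
    Nonempty (MonoidAlgebra k (Equiv.Perm (Fin 3)) ≃ₐ[k]
      (MonoidAlgebra k (Multiplicative (ZMod 2)) × Matrix (Fin 2) (Fin 2) k)) := by
  haveI : CharP k 2 := hchar ▸ ringChar.charP k
  exact ⟨AlgEquiv.ofBijective (Phi k) (Phi_bij k)⟩
end

section
/- Let k be an algebraically closed field of characteristic 2, q an odd prime power, and V = k[P^1(F_q)] the permutation module for G = PGL_2(F_q) of dimension q+1. Then V_1 = k·(sum of all basis vectors) is a 1-dimensional G-submodule of V, V_1 is contained in the augmentation submodule W = {Σλ_v · v : Σλ_v = 0} (since q+1 is even), and W/V_1 is a simple kG-module of dimension q-1. -/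
open Matrix
open scoped LinearAlgebra.Projectivization

/-- The action of `g ∈ GL₂(F)` on the projective line `ℙ¹(F)`; this action factors through
`PGL₂(F)`, and a subspace of the permutation module is `PGL₂`-invariant iff it is invariant
under this `GL₂`-action. -/
noncomputable def projAct (F : Type) [Field F] (g : GL (Fin 2) F) :
    ℙ F (Fin 2 → F) → ℙ F (Fin 2 → F) :=
  Projectivization.map
    ((Matrix.GeneralLinearGroup.toLin g).toLinearEquiv : (Fin 2 → F) →ₗ[F] (Fin 2 → F))
    (Matrix.GeneralLinearGroup.toLin g).toLinearEquiv.injective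

namespace P1Aux

variable (F : Type) [Field F]

lemma v_inf_ne : (![1, 0] : Fin 2 → F) ≠ 0 := by
  intro h; simpa using congrFun h 0

lemma v_pt_ne (x : F) : (![x, 1] : Fin 2 → F) ≠ 0 := by
  intro h; simpa using congrFun h 1

/-- The point at infinity `[1 : 0]`. -/
noncomputable def pinf : ℙ F (Fin 2 → F) := Projectivization.mk F ![1, 0] (v_inf_ne F)

/-- The affine point `[x : 1]`. -/
noncomputable def pt (x : F) : ℙ F (Fin 2 → F) := Projectivization.mk F ![x, 1] (v_pt_ne F x)

lemma pt_injective : Function.Injective (pt F) := by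
  intro x y h
  rw [pt, pt, Projectivization.mk_eq_mk_iff] at h
  obtain ⟨a, ha⟩ := h
  have h1 := congrFun ha 1
  have h0 := congrFun ha 0
  simp [Units.smul_def] at h1 h0
  rw [h1] at h0; simpa using h0.symm

lemma pt_ne_pinf (x : F) : pt F x ≠ pinf F := by
  intro h
  rw [pt, pinf, Projectivization.mk_eq_mk_iff] at h
  obtain ⟨a, ha⟩ := h
  have h1 := congrFun ha 1
  simp [Units.smul_def] at h1

lemma point_cases (P : ℙ F (Fin 2 → F)) : P = pinf F ∨ ∃ x, P = pt F x := by
  induction P using Projectivization.ind with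
  | h v hv =>
    by_cases h1 : v 1 = 0
    · left
      rw [pinf, Projectivization.mk_eq_mk_iff]
      have h0 : v 0 ≠ 0 := by
        intro h0; apply hv; funext i; fin_cases i <;> simpa
      exact ⟨Units.mk0 (v 0) h0, by funext i; fin_cases i <;> simp [h1]⟩
    · right
      refine ⟨v 0 / v 1, ?_⟩
      rw [pt, Projectivization.mk_eq_mk_iff]
      exact ⟨Units.mk0 (v 1) h1, by funext i; fin_cases i <;> (simp; try field_simp)⟩

/-- The projective line over `F` is `F` plus a point at infinity. -/
noncomputable def pequiv : Option F ≃ ℙ F (Fin 2 → F) :=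
  Equiv.ofBijective (fun o => o.elim (pinf F) (pt F))
    ⟨by
      intro o₁ o₂ h
      match o₁, o₂ with
      | none, none => rfl
      | none, some x => exact absurd h.symm (pt_ne_pinf F x)
      | some x, none => exact absurd h (pt_ne_pinf F x)
      | some x, some y => exact congrArg some (pt_injective F h),
     by
      intro P
      rcases point_cases F P with h | ⟨x, h⟩
      · exact ⟨none, h.symm⟩
      · exact ⟨some x, h.symm⟩⟩

lemma pequiv_symm_pinf : (pequiv F).symm (pinf F) = none :=
  (Equiv.symm_apply_eq _).mpr rfl

lemma pequiv_symm_pt (x : F) : (pequiv F).symm (pt F x) = some x :=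
  (Equiv.symm_apply_eq _).mpr rfl

lemma projAct_mk (g : GL (Fin 2) F) (v w : Fin 2 → F) (hv : v ≠ 0) (hw : w ≠ 0)
    (hvw : (g : Matrix (Fin 2) (Fin 2) F).mulVec v = w) :
    projAct F g (Projectivization.mk F v hv) = Projectivization.mk F w hw := by
  have h := Projectivization.map_mk
    ((Matrix.GeneralLinearGroup.toLin g).toLinearEquiv : (Fin 2 → F) →ₗ[F] (Fin 2 → F))
    (Matrix.GeneralLinearGroup.toLin g).toLinearEquiv.injective v hv
  rw [projAct, h, Projectivization.mk_eq_mk_iff]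
  exact ⟨1, by simpa using hvw.symm⟩

/-- The translation `x ↦ x + t` as an element of `GL₂`. -/
def trU (t : F) : GL (Fin 2) F :=
  ⟨!![1, t; 0, 1], !![1, -t; 0, 1],
    by ext i j; fin_cases i <;> fin_cases j <;> simp [Matrix.mul_apply, Fin.sum_univ_two],
    by ext i j; fin_cases i <;> fin_cases j <;> simp [Matrix.mul_apply, Fin.sum_univ_two]⟩

/-- The scaling `x ↦ s x` as an element of `GL₂`. -/
def scU (s : F) (hs : s ≠ 0) : GL (Fin 2) F :=
  ⟨!![s, 0; 0, 1], !![s⁻¹, 0; 0, 1],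
    by ext i j; fin_cases i <;> fin_cases j <;> simp [Matrix.mul_apply, Fin.sum_univ_two, hs],
    by ext i j; fin_cases i <;> fin_cases j <;> simp [Matrix.mul_apply, Fin.sum_univ_two, hs]⟩

lemma act_tr_pt (t x : F) : projAct F (trU F t) (pt F x) = pt F (x + t) := by
  apply projAct_mk
  funext i; fin_cases i <;> simp [trU, Matrix.mulVec, dotProduct, Fin.sum_univ_two]

lemma act_tr_inf (t : F) : projAct F (trU F t) (pinf F) = pinf F := by
  apply projAct_mk
  funext i; fin_cases i <;> simp [trU, Matrix.mulVec, dotProduct, Fin.sum_univ_two]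

lemma act_sc_pt (s : F) (hs : s ≠ 0) (x : F) :
    projAct F (scU F s hs) (pt F x) = pt F (s * x) := by
  apply projAct_mk
  funext i; fin_cases i <;> simp [scU, Matrix.mulVec, dotProduct, Fin.sum_univ_two]

lemma act_sc_inf (s : F) (hs : s ≠ 0) : projAct F (scU F s hs) (pinf F) = pinf F := by
  have h1 : projAct F (scU F s hs) (pinf F) = Projectivization.mk F ![s, 0]
      (fun h => hs (by simpa using congrFun h 0)) := by
    apply projAct_mk
    funext i; fin_cases i <;> simp [scU, Matrix.mulVec, dotProduct, Fin.sum_univ_two]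
  rw [h1, pinf, Projectivization.mk_eq_mk_iff]
  exact ⟨Units.mk0 s hs, by funext i; fin_cases i <;> simp [Units.smul_def]⟩

lemma projAct_leftInv (g : GL (Fin 2) F) (P : ℙ F (Fin 2 → F)) :
    projAct F g⁻¹ (projAct F g P) = P := by
  have hvec : ∀ u : Fin 2 → F,
      ((g⁻¹ : GL (Fin 2) F).val).mulVec ((g.val).mulVec u) = u := by
    intro u
    rw [Matrix.mulVec_mulVec]
    have hmm : (g⁻¹ : GL (Fin 2) F).val * g.val = 1 := by
      rw [← Units.val_mul, inv_mul_cancel]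
      rfl
    rw [hmm, Matrix.one_mulVec]
  induction P using Projectivization.ind with
  | h v hv =>
    have h1 : projAct F g (Projectivization.mk F v hv) =
        Projectivization.mk F ((g.val).mulVec v)
          (fun h => hv (by rw [← hvec v, h, Matrix.mulVec_zero])) :=
      projAct_mk F g v _ hv _ rfl
    rw [h1]
    exact projAct_mk F g⁻¹ _ v _ hv (hvec v)

/-- The action of `g` on `ℙ¹` as an equivalence. -/
noncomputable def pEquivGL (g : GL (Fin 2) F) : ℙ F (Fin 2 → F) ≃ ℙ F (Fin 2 → F) where
  toFun := projAct F g
  invFun := projAct F g⁻¹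
  left_inv := projAct_leftInv F g
  right_inv := by
    intro P
    have := projAct_leftInv F g⁻¹ P
    rwa [inv_inv] at this

end P1Aux

lemma exists_char (k : Type) [Field k] [IsAlgClosed k] (hchar : ringChar k = 2)
    (F : Type) [Field F] [Fintype F] [DecidableEq F] (hodd : Odd (Fintype.card F)) :
    ∃ χ : F → k, χ 0 = 1 ∧ (∀ x y, χ (x + y) = χ x * χ y) ∧
      (∀ a : F, ∑ x : F, χ (a * x) = if a = 0 then 1 else 0) := by
  haveI : CharP k 2 := hchar ▸ ringChar.charP k
  set p := ringChar F with hpdef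
  haveI hFp : CharP F p := ringChar.charP F
  obtain ⟨n, hp, hcard⟩ := FiniteField.card F p
  haveI := Fact.mk hp
  haveI : NeZero p := ⟨hp.ne_zero⟩
  have hp2 : p ≠ 2 := by
    intro h
    rw [h] at hcard
    rw [hcard] at hodd
    exact (Nat.not_odd_iff_even.mpr
      (Nat.even_pow.mpr ⟨even_iff_two_dvd.mpr dvd_rfl, PNat.ne_zero n⟩)) hodd
  have hpodd : Odd p := hp.odd_of_ne_two hp2
  have hpk : ((p : ℕ) : k) ≠ 0 := by
    obtain ⟨m, hm⟩ := hpodd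
    rw [hm]
    push_cast
    rw [show ((2:k)) = 0 from by exact_mod_cast CharP.cast_eq_zero k 2]
    simp
  haveI : NeZero ((p : ℕ) : k) := ⟨hpk⟩
  have hdeg : (Polynomial.cyclotomic p k).degree ≠ 0 := by
    rw [Polynomial.degree_cyclotomic]
    simpa using (Nat.totient_pos.mpr hp.pos).ne'
  obtain ⟨z, hz⟩ := IsAlgClosed.exists_root (Polynomial.cyclotomic p k) hdeg
  have hζ : IsPrimitiveRoot z p := Polynomial.isRoot_cyclotomic_iff.mp hz
  letI : Algebra (ZMod p) F := ZMod.algebra F p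
  haveI : Module.Finite (ZMod p) F := Module.Finite.of_finite
  have hrank : 0 < Module.finrank (ZMod p) F := Module.finrank_pos
  let b := Module.finBasis (ZMod p) F
  let i0 : Fin (Module.finrank (ZMod p) F) := ⟨0, hrank⟩
  let ℓ := b.coord i0
  let χ : F → k := fun x => z ^ (ℓ x).val
  have hmod : ∀ m : ℕ, z ^ (m % p) = z ^ m := by
    intro m
    conv_rhs => rw [← Nat.div_add_mod m p]
    rw [pow_add, pow_mul, hζ.pow_eq_one, one_pow, one_mul]
  have hzero : χ 0 = 1 := by
    simp only [χ, ℓ]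
    rw [map_zero]
    simp
  have hadd : ∀ x y, χ (x + y) = χ x * χ y := by
    intro x y
    simp only [χ]
    rw [map_add, ← pow_add, ← hmod (((ℓ x).val + (ℓ y).val)), ZMod.val_add]
  have hne : ∃ x₀, χ x₀ ≠ 1 := by
    refine ⟨b i0, ?_⟩
    have h1 : ℓ (b i0) = 1 := by
      simp only [ℓ, Module.Basis.coord_apply, Module.Basis.repr_self, Finsupp.single_eq_same]
    simp only [χ, h1, ZMod.val_one p, pow_one]
    exact hζ.ne_one hp.one_lt
  have hS : ∑ x : F, χ x = 0 := by
    obtain ⟨x₀, hx₀⟩ := hne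
    have hshift : χ x₀ * ∑ x : F, χ x = ∑ x : F, χ x := by
      rw [Finset.mul_sum]
      rw [← Equiv.sum_comp (Equiv.addLeft x₀) χ]
      apply Finset.sum_congr rfl
      intro x _
      rw [← hadd]
      rfl
    have h2 : (χ x₀ - 1) * ∑ x : F, χ x = 0 := by
      rw [sub_mul, one_mul, hshift, sub_self]
    rcases mul_eq_zero.mp h2 with h | h
    · exact absurd (sub_eq_zero.mp h) hx₀
    · exact h
  have hcardk : ((Fintype.card F : ℕ) : k) = 1 := by
    obtain ⟨m, hm⟩ := hodd
    rw [hm]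
    push_cast
    rw [show ((2:k)) = 0 from by exact_mod_cast CharP.cast_eq_zero k 2]
    simp
  refine ⟨χ, hzero, hadd, ?_⟩
  intro a
  by_cases ha : a = 0
  · subst ha
    simp only [zero_mul, hzero]
    rw [Finset.sum_const, Finset.card_univ, nsmul_eq_mul, hcardk, mul_one]
    simp
  · rw [if_neg ha]
    rw [show (∑ x : F, χ (a * x)) = ∑ x : F, χ x from ?_]
    · exact hS
    · rw [← Equiv.sum_comp (Equiv.mulLeft₀ a ha) χ]
      rfl

set_option maxHeartbeats 1000000 in
set_option synthInstance.maxHeartbeats 200000 in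
open P1Aux in
/-- Let `k` be algebraically closed of characteristic `2`, `q` an odd prime
power, and `V = k[ℙ¹(F_q)]` the permutation module for `PGL₂(F_q)` of dimension `q+1`.  Then
`V₁ = k·(sum of all basis vectors)` (realized as the constant functions inside `V = (ℙ¹ → k)`)
is a `1`-dimensional invariant submodule, `V₁` is contained in the augmentation submodule
`W = {f | ∑ f = 0}` (since `q+1` is even), and `W/V₁` is a simple module of dimension `q-1`:
it is nonzero and there is no invariant subspace strictly between `V₁` and `W`. -/
theorem permutation_module_augmentation_quotient_simple
    (k : Type) [Field k] [IsAlgClosed k] (hchar : ringChar k = 2)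
    (q : ℕ) (hq : IsPrimePow q) (hodd : Odd q)
    (F : Type) [Field F] [Fintype F] (hF : Fintype.card F = q)
    (V₁ W : Submodule k (ℙ F (Fin 2 → F) → k))
    (hV₁ : V₁ = Submodule.span k {fun _ => (1 : k)})
    (hW : ∀ f : ℙ F (Fin 2 → F) → k, f ∈ W ↔ ∑ᶠ x, f x = 0) :
    Module.finrank k (ℙ F (Fin 2 → F) → k) = q + 1 ∧
    Module.finrank k V₁ = 1 ∧
    (∀ g : GL (Fin 2) F, ∀ f ∈ V₁, (fun x => f (projAct F g x)) ∈ V₁) ∧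
    (∀ g : GL (Fin 2) F, ∀ f ∈ W, (fun x => f (projAct F g x)) ∈ W) ∧
    V₁ ≤ W ∧ V₁ ≠ W ∧
    Module.finrank k (W ⧸ V₁.comap W.subtype) = q - 1 ∧
    (∀ U : Submodule k (ℙ F (Fin 2 → F) → k),
      (∀ g : GL (Fin 2) F, ∀ f ∈ U, (fun x => f (projAct F g x)) ∈ U) →
      V₁ ≤ U → U ≤ W → U = V₁ ∨ U = W) := by
  classical
  letI : Fintype (ℙ F (Fin 2 → F)) := Fintype.ofEquiv (Option F) (pequiv F)
  -- basic cardinality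
  have hcard : Fintype.card (ℙ F (Fin 2 → F)) = q + 1 := by
    rw [← Fintype.card_congr (pequiv F), Fintype.card_option, hF]
  -- characteristic 2 facts
  haveI : CharP k 2 := hchar ▸ ringChar.charP k
  have h2 : (2 : k) = 0 := by exact_mod_cast CharP.cast_eq_zero k 2
  have haa : ∀ a : k, a + a = 0 := fun a => by
    have : (2 : k) * a = 0 := by rw [h2, zero_mul]
    linear_combination this
  have hneg : ∀ a : k, -a = a := fun a => by
    have h := haa a; linear_combination -h
  have hqk : ((q : ℕ) : k) = 1 := by
    obtain ⟨m, hm⟩ := hodd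
    rw [hm]; push_cast; rw [h2]; ring
  -- sum decomposition
  have hsum : ∀ h : ℙ F (Fin 2 → F) → k,
      ∑ᶠ P, h P = h (pinf F) + ∑ x : F, h (pt F x) := by
    intro h
    rw [finsum_eq_sum_of_fintype, ← Equiv.sum_comp (pequiv F) h, Fintype.sum_option]
    rfl
  -- membership in V₁
  have hV₁mem : ∀ f : ℙ F (Fin 2 → F) → k, f ∈ V₁ ↔ ∃ c : k, f = fun _ => c := by
    intro f
    rw [hV₁, Submodule.mem_span_singleton]
    constructor
    · rintro ⟨c, rfl⟩; exact ⟨c, by funext P; simp⟩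
    · rintro ⟨c, rfl⟩; exact ⟨c, by funext P; simp⟩
  -- the eight goals
  have hdim : Module.finrank k (ℙ F (Fin 2 → F) → k) = q + 1 := by
    rw [Module.finrank_pi, hcard]
  have hdimV₁ : Module.finrank k V₁ = 1 := by
    rw [hV₁]
    exact finrank_span_singleton (fun h => by simpa using congrFun h (pinf F))
  have hinvV₁ : ∀ g : GL (Fin 2) F, ∀ f ∈ V₁, (fun x => f (projAct F g x)) ∈ V₁ := by
    intro g f hf
    obtain ⟨c, rfl⟩ := (hV₁mem f).mp hf
    exact (hV₁mem _).mpr ⟨c, rfl⟩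
  have hinvW : ∀ g : GL (Fin 2) F, ∀ f ∈ W, (fun x => f (projAct F g x)) ∈ W := by
    intro g f hf
    rw [hW] at hf ⊢
    rw [finsum_eq_sum_of_fintype] at hf ⊢
    rw [show (∑ P, f (projAct F g P)) = ∑ P, f P from Equiv.sum_comp (pEquivGL F g) f]
    exact hf
  have hle : V₁ ≤ W := by
    intro f hf
    obtain ⟨c, rfl⟩ := (hV₁mem f).mp hf
    rw [hW, hsum, Finset.sum_const, Finset.card_univ, hF, nsmul_eq_mul, hqk, one_mul, haa]
  have hne : V₁ ≠ W := by
    intro h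
    set d₀ : ℙ F (Fin 2 → F) → k :=
      fun P => if P = pinf F then 1 else if P = pt F 0 then 1 else 0 with hd₀
    have hd₀W : d₀ ∈ W := by
      rw [hW, hsum]
      have h1 : d₀ (pinf F) = 1 := by simp [hd₀]
      have h2' : ∀ x : F, d₀ (pt F x) = if x = 0 then 1 else 0 := by
        intro x
        simp only [hd₀, if_neg (pt_ne_pinf F x)]
        by_cases hx : x = 0
        · subst hx; simp
        · rw [if_neg hx, if_neg (fun hc => hx (pt_injective F hc))]
      rw [h1]
      rw [Finset.sum_congr rfl (fun x _ => h2' x)]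
      rw [Finset.sum_ite_eq' Finset.univ (0 : F) (fun _ => (1:k))]
      simp [haa]
    rw [← h] at hd₀W
    obtain ⟨c, hc⟩ := (hV₁mem d₀).mp hd₀W
    have e1 : d₀ (pinf F) = c := by rw [hc]
    have e2 : d₀ (pt F 1) = c := by rw [hc]
    have v1 : d₀ (pinf F) = 1 := by simp [hd₀]
    have v2 : d₀ (pt F 1) = 0 := by
      simp only [hd₀, if_neg (pt_ne_pinf F 1)]
      rw [if_neg (fun hc' => one_ne_zero (pt_injective F hc'))]
    rw [v1] at e1; rw [v2] at e2
    exact one_ne_zero (e1.trans e2.symm)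
  -- dimension of W
  let Φ : (ℙ F (Fin 2 → F) → k) →ₗ[k] k :=
    { toFun := fun f => ∑ P, f P
      map_add' := by intros; simp [Finset.sum_add_distrib]
      map_smul' := by intros; simp [Finset.mul_sum] }
  have hWker : W = LinearMap.ker Φ := by
    ext f
    rw [hW, LinearMap.mem_ker, finsum_eq_sum_of_fintype]
    rfl
  have hsurj : Function.Surjective Φ := by
    intro c
    refine ⟨fun P => if P = pinf F then c else 0, ?_⟩
    show (∑ P, if P = pinf F then c else 0) = c
    rw [Finset.sum_ite_eq' Finset.univ (pinf F) (fun _ => c)]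
    simp
  have hrW : Module.finrank k W = q := by
    have h1 := LinearMap.finrank_range_add_finrank_ker Φ
    rw [LinearMap.range_eq_top.mpr hsurj, hdim] at h1
    rw [finrank_top] at h1
    rw [Module.finrank_self] at h1
    rw [hWker]
    omega
  have hquot : Module.finrank k (W ⧸ V₁.comap W.subtype) = q - 1 := by
    have h1 := Submodule.finrank_quotient_add_finrank (V₁.comap W.subtype)
    have h2' : Module.finrank k (V₁.comap W.subtype) = 1 := by
      rw [LinearEquiv.finrank_eq (Submodule.comapSubtypeEquivOfLe hle)]
      exact hdimV₁
    rw [h2', hrW] at h1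
    omega
  refine ⟨hdim, hdimV₁, hinvV₁, hinvW, hle, hne, hquot, ?_⟩
  -- simplicity
  intro U hU hV₁U hUW
  by_cases hUV : U = V₁
  · left; exact hUV
  right
  obtain ⟨χ, hχ0, hχadd, hχsum⟩ := exists_char k hchar F (hF ▸ hodd)
  -- extension by zero at infinity
  set E : (F → k) → (ℙ F (Fin 2 → F) → k) :=
    fun φ P => ((pequiv F).symm P).elim 0 φ with hE
  have hEinf : ∀ φ, E φ (pinf F) = 0 := by
    intro φ; simp only [hE, pequiv_symm_pinf]; rfl
  have hEpt : ∀ φ x, E φ (pt F x) = φ x := by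
    intro φ x; simp only [hE, pequiv_symm_pt]; rfl
  -- translation and scaling invariance
  have htr : ∀ (φ : F → k) (t : F), E φ ∈ U → E (fun x => φ (x + t)) ∈ U := by
    intro φ t h
    have h2' := hU (trU F t) _ h
    have heq : (fun P => E φ (projAct F (trU F t) P)) = E (fun x => φ (x + t)) := by
      funext P
      rcases point_cases F P with rfl | ⟨x, rfl⟩
      · rw [act_tr_inf, hEinf, hEinf]
      · rw [act_tr_pt, hEpt, hEpt]
    rwa [heq] at h2'
  have hsc : ∀ (φ : F → k) (s : F) (hs : s ≠ 0), E φ ∈ U → E (fun x => φ (s * x)) ∈ U := by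
    intro φ s hs h
    have h2' := hU (scU F s hs) _ h
    have heq : (fun P => E φ (projAct F (scU F s hs) P)) = E (fun x => φ (s * x)) := by
      funext P
      rcases point_cases F P with rfl | ⟨x, rfl⟩
      · rw [act_sc_inf, hEinf, hEinf]
      · rw [act_sc_pt, hEpt, hEpt]
    rwa [heq] at h2'
  -- a nonconstant element of U
  have hfex : ∃ f ∈ U, f ∉ V₁ := by
    by_contra hcon
    push_neg at hcon
    exact hUV (le_antisymm (fun f hf => hcon f hf) hV₁U)
  obtain ⟨f, hfU, hfV₁⟩ := hfex
  have hfW := (hW f).mp (hUW hfU)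
  rw [hsum f] at hfW
  have hnc : ∃ x y : F, f (pt F x) ≠ f (pt F y) := by
    by_contra hcon
    push_neg at hcon
    apply hfV₁
    rw [hV₁mem]
    refine ⟨f (pinf F), funext fun P => ?_⟩
    rcases point_cases F P with rfl | ⟨x, rfl⟩
    · rfl
    · have hc : ∑ y : F, f (pt F y) = Fintype.card F • f (pt F x) := by
        rw [Finset.sum_congr rfl (fun y _ => hcon y x), Finset.sum_const, Finset.card_univ]
      rw [hc, hF, nsmul_eq_mul, hqk, one_mul] at hfW
      have := haa (f (pt F x))
      -- f pinf + f (pt x) = 0 and f(pt x) + f(pt x) = 0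
      have h3 : f (pinf F) = f (pt F x) := by
        have h4 : f (pinf F) = -(f (pt F x)) := by linear_combination hfW
        rw [h4, hneg]
      exact h3.symm
  obtain ⟨x₀, y₀, hxy⟩ := hnc
  set t₀ : F := y₀ - x₀ with ht₀
  set ψ : F → k := fun x => f (pt F x) + f (pt F (x + t₀)) with hψ
  have hψU : E ψ ∈ U := by
    have h1 := U.add_mem hfU (hU (trU F t₀) _ hfU)
    have heq : (f + fun P => f (projAct F (trU F t₀) P)) = E ψ := by
      funext P
      rcases point_cases F P with rfl | ⟨x, rfl⟩
      · rw [Pi.add_apply, act_tr_inf, hEinf, haa]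
      · rw [Pi.add_apply, act_tr_pt, hEpt]
    rwa [heq] at h1
  have hψx₀ : ψ x₀ ≠ 0 := by
    simp only [hψ]
    rw [show x₀ + t₀ = y₀ from by rw [ht₀]; ring]
    intro hcc
    apply hxy
    have : f (pt F x₀) = -(f (pt F y₀)) := by linear_combination hcc
    rw [this, hneg]
  have hψsum : ∑ x : F, ψ x = 0 := by
    have h1 := (hW _).mp (hUW hψU)
    rw [hsum] at h1
    rw [hEinf] at h1
    rw [zero_add] at h1
    calc ∑ x : F, ψ x = ∑ x : F, E ψ (pt F x) := by
          apply Finset.sum_congr rfl; intro x _; rw [hEpt]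
      _ = 0 := h1
  -- Fourier coefficients
  set Fc : (F → k) → F → k := fun φ a => ∑ x : F, χ (-(a * x)) * φ x with hFc
  have hinv : ∀ (φ : F → k) (y : F), ∑ a : F, χ (a * y) * Fc φ a = φ y := by
    intro φ y
    simp only [hFc]
    calc ∑ a : F, χ (a * y) * ∑ x : F, χ (-(a * x)) * φ x
        = ∑ a : F, ∑ x : F, χ (a * y) * (χ (-(a * x)) * φ x) := by
          apply Finset.sum_congr rfl; intro a _; rw [Finset.mul_sum]
      _ = ∑ x : F, ∑ a : F, χ (a * y) * (χ (-(a * x)) * φ x) := Finset.sum_comm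
      _ = ∑ x : F, (∑ a : F, χ ((y - x) * a)) * φ x := by
          apply Finset.sum_congr rfl; intro x _
          rw [Finset.sum_mul]
          apply Finset.sum_congr rfl; intro a _
          rw [← mul_assoc, ← hχadd]
          congr 2
          ring
      _ = ∑ x : F, (if (y - x) = 0 then (1:k) else 0) * φ x := by
          apply Finset.sum_congr rfl; intro x _
          rw [hχsum]
      _ = ∑ x : F, (if x = y then φ x else 0) := by
          apply Finset.sum_congr rfl; intro x _
          by_cases hx : x = y
          · subst hx; simp
          · rw [if_neg (fun hc => hx (sub_eq_zero.mp hc).symm), if_neg hx, zero_mul]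
      _ = φ y := by rw [Finset.sum_ite_eq' Finset.univ y φ]; simp
  have hFcψ0 : Fc ψ 0 = 0 := by
    simp only [hFc, zero_mul, neg_zero, hχ0, one_mul]
    exact hψsum
  have hae : ∃ a : F, a ≠ 0 ∧ Fc ψ a ≠ 0 := by
    by_contra hcon
    push_neg at hcon
    apply hψx₀
    rw [← hinv ψ x₀]
    apply Finset.sum_eq_zero
    intro a _
    by_cases ha : a = 0
    · subst ha; rw [hFcψ0, mul_zero]
    · rw [hcon a ha, mul_zero]
  obtain ⟨a, ha0, haF⟩ := hae
  -- the character χ_a lies in U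
  have hchiU : E (fun x => χ (a * x)) ∈ U := by
    have hsum_mem : (∑ t : F, χ (-(a * t)) • (fun P => E ψ (projAct F (trU F t) P))) ∈ U :=
      Submodule.sum_mem U fun t _ => Submodule.smul_mem U _ (hU _ _ hψU)
    have heq : (∑ t : F, χ (-(a * t)) • (fun P => E ψ (projAct F (trU F t) P)))
        = Fc ψ a • E (fun x => χ (a * x)) := by
      funext P
      rw [Finset.sum_apply]
      rcases point_cases F P with rfl | ⟨x, rfl⟩
      · rw [Pi.smul_apply, hEinf, smul_zero]
        apply Finset.sum_eq_zero
        intro t _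
        rw [Pi.smul_apply, act_tr_inf, hEinf, smul_zero]
      · rw [Pi.smul_apply, hEpt, smul_eq_mul]
        have hterm : ∀ t : F, (χ (-(a * t)) • (fun P => E ψ (projAct F (trU F t) P))) (pt F x)
            = χ (-(a * t)) * ψ (x + t) := by
          intro t
          rw [Pi.smul_apply, act_tr_pt, hEpt, smul_eq_mul]
        rw [Finset.sum_congr rfl (fun t _ => hterm t)]
        have hkey : ∑ t : F, χ (-(a * t)) * ψ (x + t) = χ (a * x) * Fc ψ a := by
          simp only [hFc, Finset.mul_sum]
          rw [← Equiv.sum_comp (Equiv.addLeft x) (fun s => χ (a * x) * (χ (-(a * s)) * ψ s))]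
          apply Finset.sum_congr rfl
          intro t _
          show χ (-(a * t)) * ψ (x + t) = χ (a * x) * (χ (-(a * (x + t))) * ψ (x + t))
          rw [← mul_assoc, ← hχadd]
          congr 2
          ring
        rw [hkey, mul_comm]
    have hrw : E (fun x => χ (a * x)) = (Fc ψ a)⁻¹ • (Fc ψ a • E (fun x => χ (a * x))) := by
      rw [smul_smul, inv_mul_cancel₀ haF, one_smul]
    rw [hrw, ← heq]
    exact Submodule.smul_mem U _ hsum_mem
  -- all nontrivial characters lie in U
  have hallchi : ∀ b : F, b ≠ 0 → E (fun x => χ (b * x)) ∈ U := by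
    intro b hb
    have hs : a⁻¹ * b ≠ 0 := mul_ne_zero (inv_ne_zero ha0) hb
    have h2' := hsc (fun x => χ (a * x)) (a⁻¹ * b) hs hchiU
    have heq : (fun x => χ (a * (a⁻¹ * b * x))) = fun x => χ (b * x) := by
      funext x
      congr 1
      field_simp
    rwa [heq] at h2'
  -- every mean-zero function on F extends into U
  have hEspan : ∀ φ : F → k, (∑ x : F, φ x = 0) → E φ ∈ U := by
    intro φ hφ
    have hFcφ0 : Fc φ 0 = 0 := by
      simp only [hFc, zero_mul, neg_zero, hχ0, one_mul]
      exact hφ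
    have hrep : E φ = ∑ b ∈ Finset.univ.erase (0:F), Fc φ b • E (fun x => χ (b * x)) := by
      funext P
      rw [Finset.sum_apply]
      rcases point_cases F P with rfl | ⟨x, rfl⟩
      · rw [hEinf]
        symm
        apply Finset.sum_eq_zero
        intro b _
        rw [Pi.smul_apply, hEinf, smul_zero]
      · rw [hEpt]
        have hterm : ∀ b : F, (Fc φ b • E (fun x => χ (b * x))) (pt F x)
            = χ (b * x) * Fc φ b := by
          intro b
          rw [Pi.smul_apply, hEpt, smul_eq_mul, mul_comm]
        rw [Finset.sum_congr rfl (fun b _ => hterm b)]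
        rw [← hinv φ x]
        rw [← Finset.sum_erase_add _ _ (Finset.mem_univ (0:F))]
        rw [hFcφ0, mul_zero, add_zero]
    rw [hrep]
    exact Submodule.sum_mem U fun b hb =>
      Submodule.smul_mem U _ (hallchi b (Finset.ne_of_mem_erase hb))
  -- conclude U = W
  apply le_antisymm hUW
  intro f₂ hf₂
  have hsum2 := (hW f₂).mp hf₂
  rw [hsum f₂] at hsum2
  set α : k := f₂ (pinf F) with hα
  set φ₂ : F → k := fun x => f₂ (pt F x) + α with hφ₂
  have hsumpt : ∑ x : F, f₂ (pt F x) = α := by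
    have h4 : ∑ x : F, f₂ (pt F x) = -α := by linear_combination hsum2
    rw [h4, hneg]
  have h1 : E φ₂ ∈ U := by
    apply hEspan
    simp only [hφ₂]
    rw [Finset.sum_add_distrib, hsumpt, Finset.sum_const, Finset.card_univ, hF,
      nsmul_eq_mul, hqk, one_mul, haa]
  have hconst : (fun _ : ℙ F (Fin 2 → F) => (1:k)) ∈ U :=
    hV₁U (hV₁ ▸ Submodule.mem_span_singleton_self _)
  have hdecomp : f₂ = E φ₂ + α • (fun _ : ℙ F (Fin 2 → F) => (1:k)) := by
    funext P
    rcases point_cases F P with rfl | ⟨x, rfl⟩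
    · rw [Pi.add_apply, hEinf, Pi.smul_apply, smul_eq_mul, mul_one, zero_add]
    · rw [Pi.add_apply, hEpt, Pi.smul_apply, smul_eq_mul, mul_one]
      simp only [hφ₂]
      rw [add_assoc, haa, add_zero]
  rw [hdecomp]
  exact U.add_mem h1 (Submodule.smul_mem U _ hconst)
end

section
/- Let q be an odd prime power and k a field of characteristic 2. The permutation module V = k[P^1(F_q)] for PGL_2(F_q) is uniserial with composition series of factors (V_1, V_2, V_1), where V_1 is the trivial 1-dimensional module and V_2 is the (q-1)-dimensional simple quotient of the augmentation submodule by V_1. -/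
open Matrix
open scoped LinearAlgebra.Projectivization

set_option linter.unusedSectionVars false
set_option synthInstance.maxHeartbeats 400000
set_option maxHeartbeats 1000000

namespace PML

variable {F : Type} [Field F]

lemma toLin_apply (g : GL (Fin 2) F) (v : Fin 2 → F) :
    (Matrix.GeneralLinearGroup.toLin g).toLinearEquiv v
      = (g : Matrix (Fin 2) (Fin 2) F).mulVec v := rfl

lemma mulVec_ne_zero (g : GL (Fin 2) F) (v : Fin 2 → F) (hv : v ≠ 0) :
    (g : Matrix (Fin 2) (Fin 2) F).mulVec v ≠ 0 := by
  rw [← toLin_apply]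
  exact (Matrix.GeneralLinearGroup.toLin g).toLinearEquiv.map_ne_zero_iff.mpr hv

lemma projAct_mk (g : GL (Fin 2) F) (v : Fin 2 → F) (hv : v ≠ 0) :
    projAct F g (Projectivization.mk F v hv) =
      Projectivization.mk F ((g : Matrix (Fin 2) (Fin 2) F).mulVec v)
        (mulVec_ne_zero g v hv) := by
  unfold projAct
  rw [Projectivization.map_mk]
  rfl

lemma projAct_injective (g : GL (Fin 2) F) : Function.Injective (projAct F g) :=
  Projectivization.map_injective _ _

lemma vec_ne_zero (x : F) : ![x, 1] ≠ 0 := by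
  intro h; have := congrFun h 1; simp at this

lemma vec_inf_ne_zero : (![1, 0] : Fin 2 → F) ≠ 0 := by
  intro h; have := congrFun h 0; simp at this

noncomputable def pt (x : F) : ℙ F (Fin 2 → F) := Projectivization.mk F ![x, 1] (vec_ne_zero x)

noncomputable def inf : ℙ F (Fin 2 → F) := Projectivization.mk F ![1, 0] vec_inf_ne_zero

lemma pt_inj : Function.Injective (pt (F := F)) := by
  intro x y h
  rw [pt, pt, Projectivization.mk_eq_mk_iff'] at h
  obtain ⟨a, ha⟩ := h
  have h0 := congrFun ha 0
  have h1 := congrFun ha 1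
  simp [Matrix.smul_cons] at h0 h1
  subst h1; simpa using h0.symm

lemma pt_ne_inf (x : F) : pt x ≠ inf := by
  rw [pt, inf, Ne, Projectivization.mk_eq_mk_iff']
  rintro ⟨a, ha⟩
  have h1 := congrFun ha 1
  simp [Matrix.smul_cons] at h1

lemma cases_pt (p : ℙ F (Fin 2 → F)) : p = inf ∨ ∃ x, p = pt x := by
  induction p with
  | h v hv =>
    rcases eq_or_ne (v 1) 0 with h1 | h1
    · left
      have h0 : v 0 ≠ 0 := by
        intro h0; apply hv; ext i; fin_cases i <;> assumption
      rw [inf, Projectivization.mk_eq_mk_iff']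
      exact ⟨v 0, by ext i; fin_cases i <;> simp [Matrix.smul_cons, h1]⟩
    · right
      refine ⟨v 0 / v 1, ?_⟩
      rw [pt, Projectivization.mk_eq_mk_iff']
      exact ⟨v 1, by ext i; fin_cases i <;> simp [Matrix.smul_cons, mul_div_cancel₀ _ h1]⟩

noncomputable def chartEquiv : Option F ≃ ℙ F (Fin 2 → F) := by
  apply Equiv.ofBijective (fun o => o.elim inf pt)
  constructor
  · rintro (_ | x) (_ | y) h <;> simp at h ⊢
    · exact absurd h.symm (pt_ne_inf _)
    · exact absurd h (pt_ne_inf _)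
    · exact pt_inj h
  · intro p
    rcases cases_pt p with h | ⟨x, h⟩
    · exact ⟨none, h.symm⟩
    · exact ⟨some x, h.symm⟩

lemma chartEquiv_none : (chartEquiv (F := F)) none = inf := rfl

lemma chartEquiv_some (x : F) : (chartEquiv (F := F)) (some x) = pt x := rfl

/-- affine transformation z ↦ a z + b as element of GL₂ -/
noncomputable def gAff (a b : F) (ha : a ≠ 0) : GL (Fin 2) F :=
  Matrix.GeneralLinearGroup.mkOfDetNeZero ![![a, b], ![0, 1]] (by erw [Matrix.det_fin_two]; simp [ha])

lemma coe_gAff (a b : F) (ha : a ≠ 0) :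
    (gAff a b ha : Matrix (Fin 2) (Fin 2) F) = ![![a, b], ![0, 1]] := rfl

lemma gAff_pt (a b : F) (ha : a ≠ 0) (x : F) :
    projAct F (gAff a b ha) (pt x) = pt (a * x + b) := by
  rw [pt, projAct_mk, pt]
  congr 1
  rw [coe_gAff]
  ext i
  fin_cases i <;> simp [Matrix.mulVec, dotProduct, Fin.sum_univ_two]

lemma gAff_inf (a b : F) (ha : a ≠ 0) :
    projAct F (gAff a b ha) inf = inf := by
  rw [inf, projAct_mk, Projectivization.mk_eq_mk_iff']
  refine ⟨a, ?_⟩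
  rw [coe_gAff]
  ext i
  fin_cases i <;> simp [Matrix.mulVec, dotProduct, Fin.sum_univ_two, Matrix.smul_cons]


noncomputable def glOfEquiv (σ : (Fin 2 → F) ≃ₗ[F] (Fin 2 → F)) : GL (Fin 2) F :=
  Matrix.GeneralLinearGroup.toLin.symm (LinearMap.GeneralLinearGroup.ofLinearEquiv σ)

lemma projAct_glOfEquiv (σ : (Fin 2 → F) ≃ₗ[F] (Fin 2 → F)) (v : Fin 2 → F) (hv : v ≠ 0) :
    projAct F (glOfEquiv σ) (Projectivization.mk F v hv) =
      Projectivization.mk F (σ v) (σ.map_ne_zero_iff.mpr hv) := by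
  unfold projAct glOfEquiv
  rw [Projectivization.map_mk]
  congr 1
  simp

/-- the basis attached to two distinct points of the projective line -/
noncomputable def basisOfNe {p r : ℙ F (Fin 2 → F)} (h : p ≠ r) :
    Module.Basis (Fin 2) F (Fin 2 → F) := by
  apply basisOfLinearIndependentOfCardEqFinrank
    (b := ![p.rep, r.rep])
  · rw [← Projectivization.independent_pair_iff_ne] at h
    rw [Projectivization.independent_iff] at h
    convert h using 1
    ext i
    fin_cases i <;> rfl
  · simp

lemma basisOfNe_zero {p r : ℙ F (Fin 2 → F)} (h : p ≠ r) : basisOfNe h 0 = p.rep := by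
  rw [basisOfNe, coe_basisOfLinearIndependentOfCardEqFinrank]
  rfl

lemma basisOfNe_one {p r : ℙ F (Fin 2 → F)} (h : p ≠ r) : basisOfNe h 1 = r.rep := by
  rw [basisOfNe, coe_basisOfLinearIndependentOfCardEqFinrank]
  rfl

lemma twoTrans {p₁ p₂ r₁ r₂ : ℙ F (Fin 2 → F)} (h : p₁ ≠ p₂) (h' : r₁ ≠ r₂) :
    ∃ g : GL (Fin 2) F, projAct F g p₁ = r₁ ∧ projAct F g p₂ = r₂ := by
  set b := basisOfNe h
  set b' := basisOfNe h'
  refine ⟨glOfEquiv (b.equiv b' (Equiv.refl _)), ?_, ?_⟩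
  · conv_lhs => rw [← p₁.mk_rep]
    rw [projAct_glOfEquiv]
    have hval : (b.equiv b' (Equiv.refl _)) p₁.rep = r₁.rep := by
      rw [← basisOfNe_zero h, Module.Basis.equiv_apply, Equiv.refl_apply, basisOfNe_zero h']
    conv_rhs => rw [← r₁.mk_rep]
    rw [Projectivization.mk_eq_mk_iff']
    exact ⟨1, by simp [hval]⟩
  · conv_lhs => rw [← p₂.mk_rep]
    rw [projAct_glOfEquiv]
    have hval : (b.equiv b' (Equiv.refl _)) p₂.rep = r₂.rep := by
      rw [← basisOfNe_one h, Module.Basis.equiv_apply, Equiv.refl_apply, basisOfNe_one h']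
    conv_rhs => rw [← r₂.mk_rep]
    rw [Projectivization.mk_eq_mk_iff']
    exact ⟨1, by simp [hval]⟩


variable {k F : Type} [Field k] [Field F] [Fintype F]
open Classical in
noncomputable def delta (k : Type) [Field k] (p : ℙ F (Fin 2 → F)) : ℙ F (Fin 2 → F) → k :=
  fun x => if x = p then 1 else 0

lemma delta_self (p : ℙ F (Fin 2 → F)) : delta k p p = 1 := by simp [delta]

lemma delta_ne {p x : ℙ F (Fin 2 → F)} (h : x ≠ p) : delta k p x = 0 := by simp [delta, h]

section P
variable [Fintype (ℙ F (Fin 2 → F))]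

lemma sum_P (h : ℙ F (Fin 2 → F) → k) :
    ∑ x, h x = h inf + ∑ y : F, h (pt y) := by
  rw [← Equiv.sum_comp (chartEquiv (F := F)) h, Fintype.sum_option]
  simp [chartEquiv_none, chartEquiv_some]

lemma sum_delta (p : ℙ F (Fin 2 → F)) : ∑ x, delta k p x = 1 := by
  classical
  rw [Finset.sum_eq_single p]
  · exact delta_self p
  · intro b _ hb; exact delta_ne hb
  · intro hb; exact absurd (Finset.mem_univ p) hb

lemma sum_mul_delta (h : ℙ F (Fin 2 → F) → k) (x : ℙ F (Fin 2 → F)) :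
    ∑ p, h p * delta k p x = h x := by
  classical
  rw [Finset.sum_eq_single x]
  · rw [delta_self, mul_one]
  · intro b _ hb; rw [delta_ne (Ne.symm hb), mul_zero]
  · intro hb; exact absurd (Finset.mem_univ x) hb

lemma projAct_bij (g : GL (Fin 2) F) : Function.Bijective (projAct F g) :=
  Finite.injective_iff_bijective.mp (projAct_injective g)

lemma total_act (g : GL (Fin 2) F) (h : ℙ F (Fin 2 → F) → k) :
    ∑ x, h (projAct F g x) = ∑ x, h x :=
  Function.Bijective.sum_comp (projAct_bij g) h

lemma act_delta (g : GL (Fin 2) F) (p : ℙ F (Fin 2 → F)) :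
    (fun x => delta k (projAct F g p) (projAct F g x)) = delta k p := by
  funext x
  rcases eq_or_ne x p with rfl | hx
  · rw [delta_self, delta_self]
  · rw [delta_ne hx, delta_ne (fun hc => hx (projAct_injective g hc))]


variable [DecidableEq F]

lemma avgT (hq1 : ((Fintype.card F : ℕ) : k) = 1) (h2 : (2:k) = 0) (U : Submodule k (ℙ F (Fin 2 → F) → k))
    (hU : ∀ g : GL (Fin 2) F, ∀ f ∈ U, (fun x => f (projAct F g x)) ∈ U)
    (f : ℙ F (Fin 2 → F) → k) (hf : f ∈ U) :
    ((fun _ => ∑ y : F, f (pt y)) + (∑ x, f x) • delta k inf) ∈ U := by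
  have hadd : ∀ a : k, a + a = 0 := fun a => by rw [← two_mul, h2, zero_mul]
  have hmem : (∑ b : F, fun x => f (projAct F (gAff 1 b one_ne_zero) x)) ∈ U :=
    Submodule.sum_mem _ (fun b _ => hU _ f hf)
  convert hmem using 1
  funext p
  rw [Finset.sum_apply]
  rcases cases_pt p with rfl | ⟨x, rfl⟩
  · simp only [Pi.add_apply, Pi.smul_apply, smul_eq_mul, delta_self, mul_one, gAff_inf]
    rw [Finset.sum_const, Finset.card_univ, nsmul_eq_mul, hq1, one_mul, sum_P f]
    have : (∑ y : F, f (pt y)) + (f inf + ∑ y : F, f (pt y))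
        = ((∑ y : F, f (pt y)) + (∑ y : F, f (pt y))) + f inf := by ring
    rw [this, hadd, zero_add]
  · simp only [Pi.add_apply, Pi.smul_apply, smul_eq_mul,
      delta_ne (pt_ne_inf x), mul_zero, add_zero, gAff_pt, one_mul]
    exact (Equiv.sum_comp (Equiv.addLeft x) (fun y => f (pt y))).symm

lemma avgS (h2 : (2:k) = 0) (hqm1 : ((Fintype.card F - 1 : ℕ) : k) = 0)
    (U : Submodule k (ℙ F (Fin 2 → F) → k))
    (hU : ∀ g : GL (Fin 2) F, ∀ f ∈ U, (fun x => f (projAct F g x)) ∈ U)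
    (f : ℙ F (Fin 2 → F) → k) (hf : f ∈ U) :
    (∑ u : Fˣ, f (pt (u : F))) • ((fun _ => (1:k)) + delta k (pt 0) + delta k inf) ∈ U := by
  have hadd : ∀ a : k, a + a = 0 := fun a => by rw [← two_mul, h2, zero_mul]
  have hcard : ∀ a : k, Fintype.card Fˣ • a = 0 := by
    intro a
    rw [nsmul_eq_mul, Fintype.card_units, hqm1, zero_mul]
  have hmem : (∑ u : Fˣ, fun x => f (projAct F (gAff (u : F) 0 u.ne_zero) x)) ∈ U :=
    Submodule.sum_mem _ (fun u _ => hU _ f hf)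
  convert hmem using 1
  funext p
  rw [Finset.sum_apply]
  rcases cases_pt p with rfl | ⟨x, rfl⟩
  · simp only [Pi.smul_apply, Pi.add_apply, smul_eq_mul, delta_self, gAff_inf,
      delta_ne (Ne.symm (pt_ne_inf (0:F)))]
    rw [Finset.sum_const, Finset.card_univ, hcard]
    rw [show ((1:k) + 0 + 1) = 2 by ring, mul_two, hadd]
  · rcases eq_or_ne x 0 with rfl | hx
    · have h1 : ∀ u : Fˣ, (u : F) * 0 + 0 = 0 := by intro u; ring
      simp only [Pi.smul_apply, Pi.add_apply, smul_eq_mul, delta_self, gAff_pt, h1,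
        delta_ne (pt_ne_inf (0:F))]
      rw [Finset.sum_const, Finset.card_univ, hcard]
      rw [show ((1:k) + 1 + 0) = 2 by ring, mul_two, hadd]
    · simp only [Pi.smul_apply, Pi.add_apply, smul_eq_mul, gAff_pt, add_zero]
      rw [delta_ne (fun hc => hx (pt_inj hc)), delta_ne (pt_ne_inf x), add_zero, add_zero,
        mul_one]
      have := Equiv.sum_comp (Equiv.mulRight (Units.mk0 x hx)) (fun u : Fˣ => f (pt (u : F)))
      simp only [Equiv.coe_mulRight, Units.val_mul, Units.val_mk0] at this
      exact this.symm

noncomputable def unitsEquiv : Option Fˣ ≃ F := by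
  apply Equiv.ofBijective (fun o => o.elim 0 (fun u => (u : F)))
  constructor
  · rintro (_ | u) (_ | v) h
    · rfl
    · exact absurd (show (0:F) = (v:F) from h).symm v.ne_zero
    · exact absurd (show ((u:F)) = 0 from h) u.ne_zero
    · exact congrArg some (Units.ext (show ((u:F)) = (v:F) from h))
  · intro x
    rcases eq_or_ne x 0 with rfl | hx
    · exact ⟨none, rfl⟩
    · obtain ⟨u, hu⟩ := hx.isUnit
      exact ⟨some u, hu⟩

lemma sum_units (H : F → k) : ∑ y : F, H y = H 0 + ∑ u : Fˣ, H (u : F) := by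
  rw [← Equiv.sum_comp (unitsEquiv (F := F)) H, Fintype.sum_option]
  rfl

lemma W_le (h2 : (2:k) = 0) (hq1 : ((Fintype.card F : ℕ) : k) = 1)
    (hqm1 : ((Fintype.card F - 1 : ℕ) : k) = 0)
    (U : Submodule k (ℙ F (Fin 2 → F) → k))
    (hU : ∀ g : GL (Fin 2) F, ∀ f ∈ U, (fun x => f (projAct F g x)) ∈ U)
    (f : ℙ F (Fin 2 → F) → k) (hf : f ∈ U)
    {p r : ℙ F (Fin 2 → F)} (hpr : f p ≠ f r) :
    ∀ h : ℙ F (Fin 2 → F) → k, (∑ x, h x = 0) → h ∈ U := by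
  have hadd : ∀ a : k, a + a = 0 := fun a => by rw [← two_mul, h2, zero_mul]
  have hzero : ∀ a b : k, a + b = 0 → a = b := fun a b h0 =>
    (eq_neg_of_add_eq_zero_left h0).trans (neg_eq_of_add_eq_zero_left (hadd b))
  have hne : ∀ a b : k, a ≠ b → a + b ≠ 0 := fun a b hab h0 => hab (hzero a b h0)
  -- Step A: find one pair
  have hpair : ∃ p' r' : ℙ F (Fin 2 → F), p' ≠ r' ∧ (delta k p' + delta k r') ∈ U := by
    by_cases htot : (∑ x, f x) = 0
    · -- get a point where f is nonzero
      obtain ⟨p₀, hp₀⟩ : ∃ p₀, f p₀ ≠ 0 := by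
        rcases eq_or_ne (f p) 0 with h | h
        · exact ⟨r, fun hr => hpr (h.trans hr.symm)⟩
        · exact ⟨p, h⟩
      obtain ⟨r₀, hr₀⟩ : ∃ r₀, p₀ ≠ r₀ := by
        rcases eq_or_ne p₀ inf with rfl | h
        · exact ⟨pt 0, Ne.symm (pt_ne_inf (0:F))⟩
        · exact ⟨inf, h⟩
      obtain ⟨g₁, hg₁, -⟩ := twoTrans (Ne.symm (pt_ne_inf (0:F))) hr₀
      set f₁ : ℙ F (Fin 2 → F) → k := fun x => f (projAct F g₁ x) with hf₁def
      have hf₁ : f₁ ∈ U := hU g₁ f hf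
      have htot₁ : (∑ x, f₁ x) = 0 := by rw [hf₁def, total_act g₁ f, htot]
      have hf₁inf : f₁ inf = f p₀ := by
        show f (projAct F g₁ inf) = f p₀
        rw [hg₁]
      have hS₁ : (∑ y : F, f₁ (pt y)) ≠ 0 := by
        intro h0
        apply hp₀
        rw [← hf₁inf]
        have := htot₁
        rw [sum_P f₁, h0, add_zero] at this
        exact this
      have hone : (fun _ => (1:k)) ∈ (U : Submodule k (ℙ F (Fin 2 → F) → k)) := by
        have A := avgT hq1 h2 U hU f₁ hf₁
        rw [htot₁, zero_smul, add_zero] at A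
        have := U.smul_mem (∑ y : F, f₁ (pt y))⁻¹ A
        convert this using 1
        funext x
        simp [inv_mul_cancel₀ hS₁]
      -- now use avgS on f₂
      have hpr' : p ≠ r := fun h => hpr (by rw [h])
      obtain ⟨g₂, hga, hgb⟩ := twoTrans (pt_ne_inf (0:F)) hpr'
      set f₂ : ℙ F (Fin 2 → F) → k := fun x => f (projAct F g₂ x) with hf₂def
      have hf₂ : f₂ ∈ U := hU g₂ f hf
      have htot₂ : (∑ x, f₂ x) = 0 := by rw [hf₂def, total_act g₂ f, htot]
      have hf₂0 : f₂ (pt 0) = f p := by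
        show f (projAct F g₂ (pt 0)) = f p
        rw [hga]
      have hf₂inf : f₂ inf = f r := by
        show f (projAct F g₂ inf) = f r
        rw [hgb]
      set s₂ : k := ∑ u : Fˣ, f₂ (pt (u : F)) with hs₂def
      have hs₂ : s₂ ≠ 0 := by
        intro h0
        have h1 := htot₂
        rw [sum_P f₂, sum_units (fun y => f₂ (pt y)), ← hs₂def, h0, add_zero] at h1
        exact hne (f r) (f p) (Ne.symm hpr) (by rw [← hf₂inf, ← hf₂0]; exact h1)
      have A := avgS h2 hqm1 U hU f₂ hf₂
      rw [← hs₂def] at A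
      have C : s₂ • (delta k (pt (0:F)) + delta k inf) ∈ U := by
        have C0 : s₂ • ((fun _ => (1:k)) + delta k (pt (0:F)) + delta k inf)
            + s₂ • (fun _ => (1:k)) ∈ U := U.add_mem A (U.smul_mem s₂ hone)
        convert C0 using 1
        funext x
        simp only [Pi.smul_apply, Pi.add_apply, smul_eq_mul]
        linear_combination (-1 : k) * hadd s₂
      have B : (delta k (pt (0:F)) + delta k inf) ∈ U := by
        have := U.smul_mem s₂⁻¹ C
        rwa [inv_smul_smul₀ hs₂] at this
      exact ⟨pt 0, inf, pt_ne_inf (0:F), B⟩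
    · -- total ≠ 0
      have A₀ := avgT hq1 h2 U hU f hf
      obtain ⟨g, hg1, hg2⟩ := twoTrans (pt_ne_inf (0:F)) (Ne.symm (pt_ne_inf (0:F)))
      have A₁ := hU g _ A₀
      have hA₁ : (fun x => (((fun _ => ∑ y : F, f (pt y)) + (∑ x, f x) • delta k inf :
              ℙ F (Fin 2 → F) → k))
            (projAct F g x))
          = ((fun _ => ∑ y : F, f (pt y)) + (∑ x, f x) • delta k (pt (0:F))) := by
        funext x
        simp only [Pi.add_apply, Pi.smul_apply, smul_eq_mul]
        congr 1
        rw [← hg1]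
        exact congrArg _ (congrFun (act_delta g (pt 0)) x)
      rw [hA₁] at A₁
      have C : ((∑ x, f x) • (delta k inf + delta k (pt (0:F)))) ∈ U := by
        have := U.add_mem A₀ A₁
        convert this using 1
        funext x
        simp only [Pi.add_apply, Pi.smul_apply, smul_eq_mul]
        rw [show (∑ x, f x) * (delta k inf x + delta k (pt (0:F)) x)
            = ((∑ y : F, f (pt y)) + (∑ x, f x) * delta k inf x)
              + ((∑ y : F, f (pt y)) + (∑ x, f x) * delta k (pt (0:F)) x)
              - ((∑ y : F, f (pt y)) + (∑ y : F, f (pt y))) from by ring, hadd, sub_zero]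
      refine ⟨inf, pt 0, Ne.symm (pt_ne_inf (0:F)), ?_⟩
      have := U.smul_mem (∑ x, f x)⁻¹ C
      rwa [inv_smul_smul₀ htot] at this
  -- Step B: all pairs
  obtain ⟨p', r', hne', hmem'⟩ := hpair
  have hdiff : ∀ a b : ℙ F (Fin 2 → F), a ≠ b → (delta k a + delta k b) ∈ U := by
    intro a b hab
    obtain ⟨g, hga, hgb⟩ := twoTrans hab hne'
    have := hU g _ hmem'
    convert this using 1
    funext x
    simp only [Pi.add_apply]
    rw [← hga, ← hgb, congrFun (act_delta g a) x, congrFun (act_delta g b) x]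
  -- Step C
  intro h hh
  have hrep : h = ∑ p : ℙ F (Fin 2 → F), h p • (delta k p + delta k inf) := by
    funext x
    rw [Finset.sum_apply]
    simp only [Pi.smul_apply, Pi.add_apply, smul_eq_mul, mul_add]
    rw [Finset.sum_add_distrib, sum_mul_delta h x, ← Finset.sum_mul, hh, zero_mul, add_zero]
  rw [hrep]
  apply Submodule.sum_mem
  intro c _
  rcases eq_or_ne c inf with rfl | hc
  · have : (delta k (inf (F := F)) + delta k inf : ℙ F (Fin 2 → F) → k) = 0 := by
      funext x
      exact hadd _
    rw [this, smul_zero]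
    exact U.zero_mem
  · exact U.smul_mem _ (hdiff c inf hc)

end P

end PML

theorem permutation_module_uniserial
    (k : Type) [Field k] (hchar : ringChar k = 2)
    (q : ℕ) (hq : IsPrimePow q) (hodd : Odd q)
    (F : Type) [Field F] [Fintype F] (hF : Fintype.card F = q)
    (V₁ W : Submodule k (ℙ F (Fin 2 → F) → k))
    (hV₁ : V₁ = Submodule.span k {fun _ => (1 : k)})
    (hW : ∀ f : ℙ F (Fin 2 → F) → k, f ∈ W ↔ ∑ᶠ x, f x = 0) :
    (⊥ : Submodule k (ℙ F (Fin 2 → F) → k)) < V₁ ∧ V₁ < W ∧ W < ⊤ ∧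
    Module.finrank k V₁ = 1 ∧
    Module.finrank k (W ⧸ V₁.comap W.subtype) = q - 1 ∧
    (∀ U : Submodule k (ℙ F (Fin 2 → F) → k),
      (∀ g : GL (Fin 2) F, ∀ f ∈ U, (fun x => f (projAct F g x)) ∈ U) →
      U = ⊥ ∨ U = V₁ ∨ U = W ∨ U = ⊤) := by
  classical
  haveI : Fintype (ℙ F (Fin 2 → F)) := Fintype.ofEquiv (Option F) PML.chartEquiv
  haveI : CharP k 2 := hchar ▸ ringChar.charP k
  have h2 : (2 : k) = 0 := by exact_mod_cast CharP.cast_eq_zero k 2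
  have hadd : ∀ a : k, a + a = 0 := fun a => by rw [← two_mul, h2, zero_mul]
  obtain ⟨m, hm⟩ := hodd
  have hq2 : 2 ≤ q := hq.two_le
  have hq1 : ((Fintype.card F : ℕ) : k) = 1 := by
    rw [hF, hm]; push_cast; linear_combination m * h2
  have hqm1 : ((Fintype.card F - 1 : ℕ) : k) = 0 := by
    rw [hF, hm, Nat.add_sub_cancel]; push_cast; linear_combination m * h2
  have hcardP : Fintype.card (ℙ F (Fin 2 → F)) = q + 1 := by
    rw [← Fintype.card_congr (PML.chartEquiv (F := F)), Fintype.card_option, hF]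
  have hcastP : ((Fintype.card (ℙ F (Fin 2 → F)) : ℕ) : k) = 0 := by
    rw [hcardP, hm]; push_cast; linear_combination (m+1) * h2
  have hWsum : ∀ f : ℙ F (Fin 2 → F) → k, f ∈ W ↔ ∑ x, f x = 0 := by
    intro f; rw [hW f, finsum_eq_sum_of_fintype]
  set L : (ℙ F (Fin 2 → F) → k) →ₗ[k] k :=
    ∑ p : ℙ F (Fin 2 → F), LinearMap.proj p with hLdef
  have hLapp : ∀ f : ℙ F (Fin 2 → F) → k, L f = ∑ x, f x := by
    intro f
    rw [hLdef, LinearMap.sum_apply]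
    simp [LinearMap.proj_apply]
  have hWker : W = LinearMap.ker L := by
    ext f; rw [LinearMap.mem_ker, hWsum, hLapp]
  have hone_ne : (fun _ => (1:k)) ≠ (0 : ℙ F (Fin 2 → F) → k) := fun h =>
    one_ne_zero (congrFun h PML.inf)
  have honeV : (fun _ => (1:k)) ∈ V₁ := hV₁ ▸ Submodule.mem_span_singleton_self _
  have hrank1 : Module.finrank k V₁ = 1 := by
    rw [hV₁]; exact finrank_span_singleton hone_ne
  have hVW : V₁ ≤ W := by
    rw [hV₁, Submodule.span_le, Set.singleton_subset_iff]
    refine (hWsum _).mpr ?_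
    rw [Finset.sum_const, Finset.card_univ, nsmul_eq_mul, mul_one, hcastP]
  have hLsurj : LinearMap.range L = ⊤ := by
    rw [LinearMap.range_eq_top]
    intro c
    refine ⟨c • PML.delta k PML.inf, ?_⟩
    rw [LinearMap.map_smul, hLapp, PML.sum_delta, smul_eq_mul, mul_one]
  have hrange1 : Module.finrank k (LinearMap.range L) = 1 := by
    rw [hLsurj, finrank_top, Module.finrank_self]
  have hrkW : Module.finrank k W = q := by
    have h := LinearMap.finrank_range_add_finrank_ker L
    rw [hrange1, Module.finrank_fintype_fun_eq_card, hcardP, ← hWker] at h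
    omega
  have hbotV : (⊥ : Submodule k (ℙ F (Fin 2 → F) → k)) < V₁ := by
    refine bot_lt_iff_ne_bot.mpr (fun hb => hone_ne ?_)
    have := honeV
    rw [hb] at this
    exact (Submodule.mem_bot k).mp this
  have hVWlt : V₁ < W := by
    refine lt_of_le_of_ne hVW (fun h => ?_)
    rw [h, hrkW] at hrank1
    omega
  have hWtop : W < ⊤ := by
    refine lt_top_iff_ne_top.mpr (fun h => ?_)
    have : PML.delta k PML.inf ∈ W := h ▸ Submodule.mem_top
    rw [hWsum, PML.sum_delta] at this
    exact one_ne_zero this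
  have hquot : Module.finrank k (W ⧸ V₁.comap W.subtype) = q - 1 := by
    have h1 : Module.finrank k (V₁.comap W.subtype) = 1 := by
      rw [LinearEquiv.finrank_eq (Submodule.comapSubtypeEquivOfLe hVW), hrank1]
    have h2' := Submodule.finrank_quotient_add_finrank (V₁.comap W.subtype)
    rw [h1, hrkW] at h2'
    omega
  refine ⟨hbotV, hVWlt, hWtop, hrank1, hquot, ?_⟩
  intro U hU
  by_cases hUV : U ≤ V₁
  · by_cases hUbot : U = ⊥
    · exact Or.inl hUbot
    · refine Or.inr (Or.inl ?_)
      obtain ⟨f, hfU, hf0⟩ := U.ne_bot_iff.mp hUbot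
      obtain ⟨c, hc⟩ := (hV₁ ▸ Submodule.mem_span_singleton).mp (hUV hfU)
      have hc0 : c ≠ 0 := fun h => hf0 (by rw [← hc, h, zero_smul])
      have honeU : (fun _ => (1:k)) ∈ U := by
        have := U.smul_mem c⁻¹ hfU
        rw [← hc, inv_smul_smul₀ hc0] at this
        exact this
      refine le_antisymm hUV ?_
      rw [hV₁, Submodule.span_le, Set.singleton_subset_iff]
      exact honeU
  · refine Or.inr (Or.inr ?_)
    obtain ⟨f, hfU, hfV⟩ := SetLike.not_le_iff_exists.mp hUV
    obtain ⟨p, r, hpr⟩ : ∃ p r, f p ≠ f r := by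
      by_contra hcon
      push_neg at hcon
      refine hfV (hV₁ ▸ Submodule.mem_span_singleton.mpr ⟨f PML.inf, ?_⟩)
      funext x
      simp only [Pi.smul_apply, smul_eq_mul, mul_one]
      exact hcon PML.inf x
    have hWU : W ≤ U := fun h hh =>
      PML.W_le h2 hq1 hqm1 U hU f hfU hpr h ((hWsum h).mp hh)
    by_cases hUW : U ≤ W
    · exact Or.inl (le_antisymm hUW hWU)
    · refine Or.inr (eq_top_iff.mpr ?_)
      obtain ⟨h, hhU, hhW⟩ := SetLike.not_le_iff_exists.mp hUW
      have hs : (∑ x, h x) ≠ 0 := fun h0 => hhW ((hWsum h).mpr h0)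
      intro v _
      set c : k := (∑ x, v x) * (∑ x, h x)⁻¹ with hcdef
      have hvW : v + c • h ∈ W := by
        refine (hWsum _).mpr ?_
        have : ∑ x, (v + c • h) x = (∑ x, v x) + c * (∑ x, h x) := by
          simp [Finset.sum_add_distrib, Finset.mul_sum]
        rw [this, hcdef, mul_assoc, inv_mul_cancel₀ hs, mul_one]
        exact hadd _
      have hsum : v = (v + c • h) + c • h := by
        funext x
        simp only [Pi.add_apply, Pi.smul_apply, smul_eq_mul]
        rw [add_assoc, hadd, add_zero]
      rw [hsum]
      exact U.add_mem (hWU hvW) (U.smul_mem c hhU)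
end

section
/- Let q be a prime power with q ≡ 3 (mod 4) and let 2^(m-2) be the largest power of 2 dividing q+1, so m ≥ 4. In a Sylow 2-subgroup P ≅ SD_{2^m} = ⟨x,t⟩ of G = GL_2(F_q), the elements x^{2^{m-3}} and tx (both of order 4, generating a quaternion subgroup Q of order 8) are conjugate in G but not conjugate by any element of N_P(Q). -/
open Matrix

section helpers

lemma matrix_pow_eq_neg_one {K : Type*} [Field K] {q N : ℕ} (hqodd : Odd q) (ξ : K)
    (hdist : ξ ^ q ≠ ξ) (hq1 : ξ ^ (q + 1) = -1) (hN : ξ ^ N = -1) :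
    (!![0, 1; 1, ξ + ξ ^ q] : Matrix (Fin 2) (Fin 2) K) ^ N = -1 := by
  set A : Matrix (Fin 2) (Fin 2) K := !![0, 1; 1, ξ + ξ ^ q] with hA
  set s : Matrix (Fin 2) (Fin 2) K := !![1, 1; ξ, ξ ^ q] with hs
  set D : Matrix (Fin 2) (Fin 2) K := !![ξ, 0; 0, ξ ^ q] with hD
  have hq1' : ξ ^ q * ξ = -1 := by rw [← pow_succ]; exact hq1
  have hAs : A * s = s * D := by
    ext i j
    fin_cases i <;> fin_cases j <;>
      simp [hA, hs, hD, Matrix.mul_apply, Fin.sum_univ_succ] <;>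
      linear_combination hq1'
  have hDpow : ∀ n : ℕ, D ^ n = !![ξ ^ n, 0; 0, (ξ ^ q) ^ n] := by
    intro n
    induction n with
    | zero => simp [Matrix.one_fin_two]
    | succ k ih =>
      rw [pow_succ, ih, hD, Matrix.mul_fin_two]
      ext i j
      fin_cases i <;> fin_cases j <;> simp [pow_succ]
  have hAn : ∀ n : ℕ, A ^ n * s = s * D ^ n := by
    intro n
    induction n with
    | zero => simp
    | succ k ih =>
      rw [pow_succ', pow_succ', mul_assoc, ih, ← mul_assoc, hAs, mul_assoc]
  have hdet : IsUnit s.det := by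
    rw [hs, Matrix.det_fin_two_of]
    simpa [sub_eq_zero, isUnit_iff_ne_zero, eq_comm] using hdist
  have hDN : D ^ N = -1 := by
    rw [hDpow, hN, ← pow_mul, mul_comm q N, pow_mul, hN, hqodd.neg_one_pow]
    ext i j
    fin_cases i <;> fin_cases j <;> simp [Matrix.one_fin_two]
  have hfin : A ^ N * s = -1 * s := by
    rw [hAn, hDN]
    rw [neg_one_mul, mul_neg_one]
  exact ((Matrix.isUnit_iff_isUnit_det s).mpr hdet).mul_right_cancel hfin

open QuaternionGroup in
/-- The map from `QuaternionGroup 2` determined by two elements `u`, `v`. -/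
def quatMap {G : Type*} [Group G] (u v : G) : QuaternionGroup 2 → G
  | .a i => u ^ i.val
  | .xa i => v * u ^ i.val

lemma quatMap_a {G : Type*} [Group G] (u v : G) (i : ZMod (2 * 2)) :
    quatMap u v (QuaternionGroup.a i) = u ^ i.val := rfl

lemma quatMap_xa {G : Type*} [Group G] (u v : G) (i : ZMod (2 * 2)) :
    quatMap u v (QuaternionGroup.xa i) = v * u ^ i.val := rfl

/-- The monoid hom from `QuaternionGroup 2` determined by `u`,`v` satisfying the relations. -/
def quatHom {G : Type*} [Group G] (u v : G) (h4 : orderOf u = 4)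
    (huv : u * v = v * u ^ 3) (hvv : v * v = u * u) : QuaternionGroup 2 →* G := by
  have hswap : ∀ k : ℕ, u ^ k * v = v * u ^ (3 * k) := by
    intro k
    induction k with
    | zero => simp
    | succ n ih =>
      rw [pow_succ, mul_assoc, huv, ← mul_assoc, ih, mul_assoc, ← pow_add,
        Nat.mul_succ]
  have hcast : ∀ s r : ℕ, ((s : ZMod (2 * 2)) = (r : ZMod (2 * 2))) → u ^ s = u ^ r := by
    intro s r h
    rw [pow_eq_pow_iff_modEq, h4]
    exact (ZMod.natCast_eq_natCast_iff _ _ _).mp h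
  have hval : ∀ i : ZMod (2 * 2), ((i.val : ℕ) : ZMod (2 * 2)) = i :=
    fun i => ZMod.natCast_rightInverse i
  refine MonoidHom.mk' (quatMap u v) ?_
  rintro (i | i) (j | j)
  · show quatMap u v (.a (i + j)) = _
    rw [quatMap_a, quatMap_a, quatMap_a, ← pow_add]
    refine hcast _ _ ?_
    rw [Nat.cast_add, hval, hval, hval]
  · show quatMap u v (.xa (j - i)) = _
    rw [quatMap_xa, quatMap_a, quatMap_xa, ← mul_assoc, hswap, mul_assoc, ← pow_add]
    congr 1
    refine hcast _ _ ?_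
    rw [hval, Nat.cast_add, Nat.cast_mul, hval, hval]
    have h3 : (3 : ZMod (2 * 2)) = -1 := by decide
    have h32 : ((3 : ℕ) : ZMod (2 * 2)) = -1 := by decide
    rw [h32]
    ring
  · show quatMap u v (.xa (i + j)) = _
    rw [quatMap_xa, quatMap_xa, quatMap_a, mul_assoc, ← pow_add]
    congr 1
    refine hcast _ _ ?_
    rw [hval, Nat.cast_add, hval, hval]
  · show quatMap u v (.a ((2 : ZMod (2 * 2)) + j - i)) = _
    rw [quatMap_a, quatMap_xa, quatMap_xa]
    have hrhs : v * u ^ i.val * (v * u ^ j.val) = u ^ (2 + (3 * i.val + j.val)) := by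
      calc v * u ^ i.val * (v * u ^ j.val) = v * (u ^ i.val * v) * u ^ j.val := by group
        _ = v * (v * u ^ (3 * i.val)) * u ^ j.val := by rw [hswap]
        _ = v * v * u ^ (3 * i.val + j.val) := by rw [pow_add]; group
        _ = u * u * u ^ (3 * i.val + j.val) := by rw [hvv]
        _ = u ^ (2 + (3 * i.val + j.val)) := by
              group
    rw [hrhs]
    refine hcast _ _ ?_
    rw [hval, Nat.cast_add, Nat.cast_add, Nat.cast_mul, hval, hval]
    have h32 : ((3 : ℕ) : ZMod (2 * 2)) = -1 := by decide
    have h22 : ((2 : ℕ) : ZMod (2 * 2)) = (2 : ZMod (2 * 2)) := by decide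
    rw [h32, h22]
    ring

end helpers

open Matrix

set_option maxHeartbeats 2000000 in
/-- Let `q ≡ 3 (mod 4)` be a prime power, `2^(m-2)` the exact power of `2`
dividing `q+1` (so `m ≥ 4`), and let `P = ⟨x, t⟩ ≅ SD_{2^m}` be a Sylow `2`-subgroup of
`G = GL₂(F_q)`, where `x = [[0,1],[1,a]]`, `t = [[1,a],[0,-1]]`, `a = ξ + ξ^q` for `ξ` a
primitive `2^(m-1)`-th root of unity in `F_{q^2}`.  Then `x^(2^(m-3))` and `t*x` both have
order `4` and generate a quaternion subgroup `Q` of order `8`; they are conjugate in `G`,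
but not conjugate by any element of `N_P(Q)`. -/
theorem quaternion_generators_conjugate_in_G_not_in_P
    (q m : ℕ) (hq : IsPrimePow q) (hq3 : q % 4 = 3) (hm : 4 ≤ m)
    (hdvd : 2 ^ (m - 2) ∣ q + 1) (hndvd : ¬ 2 ^ (m - 1) ∣ q + 1)
    (F K : Type) [Field F] [Field K] [Fintype F] [Fintype K] [Algebra F K]
    (hF : Fintype.card F = q) (hK : Fintype.card K = q ^ 2)
    (ξ : K) (hξ : orderOf ξ = 2 ^ (m - 1))
    (a : F) (ha : algebraMap F K a = ξ + ξ ^ q)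
    (x t : GL (Fin 2) F)
    (hx : (x : Matrix (Fin 2) (Fin 2) F) = !![0, 1; 1, a])
    (ht : (t : Matrix (Fin 2) (Fin 2) F) = !![1, a; 0, -1])
    (P : Subgroup (GL (Fin 2) F)) (hP : P = Subgroup.closure {x, t})
    (hSyl : ∃ S : Sylow 2 (GL (Fin 2) F), (S : Subgroup (GL (Fin 2) F)) = P)
    (Q : Subgroup (GL (Fin 2) F))
    (hQ : Q = Subgroup.closure {x ^ (2 ^ (m - 3)), t * x}) :
    orderOf (x ^ (2 ^ (m - 3))) = 4 ∧ orderOf (t * x) = 4 ∧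
    Nat.card Q = 8 ∧ Nonempty (Q ≃* QuaternionGroup 2) ∧
    IsConj (x ^ (2 ^ (m - 3))) (t * x) ∧
    ¬ ∃ g ∈ P ⊓ Subgroup.normalizer (Q : Set (GL (Fin 2) F)), g * x ^ (2 ^ (m - 3)) * g⁻¹ = t * x := by
  classical
  set u : GL (Fin 2) F := x ^ (2 ^ (m - 3)) with hu_def
  set v : GL (Fin 2) F := t * x with hv_def
  -- basic arithmetic facts
  have hqodd : Odd q := Nat.odd_iff.mpr (by omega)
  have hns : ¬ IsSquare (-1 : F) := by
    rw [FiniteField.isSquare_neg_one_iff, hF, hq3]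
    simp
  have h2F : (2 : F) ≠ 0 := by
    intro h
    exact hns (by rw [show (-1 : F) = 1 by linear_combination -h]; exact ⟨1, (one_mul 1).symm⟩)
  have hm1F : (-1 : F) ≠ 1 := fun h => h2F (by linear_combination -h)
  -- facts about ξ
  have hsq_eq : ∀ y : K, y ^ 2 = 1 → y ≠ 1 → y = -1 := by
    intro y h hne
    have h0 : (y - 1) * (y + 1) = 0 := by linear_combination h
    rcases mul_eq_zero.mp h0 with h1 | h1
    · exact absurd (by linear_combination h1) hne
    · linear_combination h1
  have hξ2 : ξ ^ (2 ^ (m - 2)) = -1 := by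
    apply hsq_eq
    · rw [← pow_mul, show 2 ^ (m - 2) * 2 = 2 ^ (m - 1) by
        rw [← pow_succ]; congr 1; omega, ← hξ, pow_orderOf_eq_one]
    · intro h
      have hd := orderOf_dvd_of_pow_eq_one h
      rw [hξ] at hd
      have := (Nat.pow_dvd_pow_iff_le_right (by norm_num : 1 < 2)).mp hd
      omega
  have hq1K : ξ ^ (q + 1) = -1 := by
    apply hsq_eq
    · rw [← pow_mul, ← orderOf_dvd_iff_pow_eq_one, hξ]
      have : (2 : ℕ) ^ (m - 1) = 2 ^ (m - 2) * 2 := by rw [← pow_succ]; congr 1; omega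
      rw [this]
      exact mul_dvd_mul hdvd dvd_rfl
    · intro h
      exact hndvd (by rw [← hξ]; exact orderOf_dvd_of_pow_eq_one h)
  have hξ0 : ξ ≠ 0 := by
    intro h0
    have h1 : ξ ^ 2 ^ (m - 1) = 1 := hξ ▸ pow_orderOf_eq_one ξ
    rw [h0, zero_pow (by positivity)] at h1
    exact zero_ne_one h1
  have hdist : ξ ^ q ≠ ξ := by
    intro h
    have h1 : ξ ^ (q - 1) * ξ = 1 * ξ := by
      rw [← pow_succ, one_mul, show q - 1 + 1 = q by omega]
      exact h
    have h2 : ξ ^ (q - 1) = 1 := mul_right_cancel₀ hξ0 h1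
    have h3 : 2 ^ (m - 1) ∣ q - 1 := hξ ▸ orderOf_dvd_of_pow_eq_one h2
    obtain ⟨c, hc⟩ : (8 : ℕ) ∣ q - 1 :=
      dvd_trans (pow_dvd_pow 2 (by omega : 3 ≤ m - 1)) h3
    omega
  -- x ^ (2^(m-2)) = -1 at the matrix level
  have hmapx : (algebraMap F K).mapMatrix (x : Matrix (Fin 2) (Fin 2) F)
      = !![0, 1; 1, ξ + ξ ^ q] := by
    rw [hx]
    ext i j
    fin_cases i <;> fin_cases j <;>
      simp [RingHom.mapMatrix_apply, Matrix.map_apply, ha]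
  have hxN : (x : Matrix (Fin 2) (Fin 2) F) ^ (2 ^ (m - 2)) = -1 := by
    have hKpow := matrix_pow_eq_neg_one hqodd ξ hdist hq1K hξ2
    have hmappow : (algebraMap F K).mapMatrix ((x : Matrix (Fin 2) (Fin 2) F) ^ (2 ^ (m - 2)))
        = (algebraMap F K).mapMatrix (-1 : Matrix (Fin 2) (Fin 2) F) := by
      rw [map_pow, hmapx, hKpow, map_neg, _root_.map_one]
    ext i j
    apply (algebraMap F K).injective
    have h2 : ((algebraMap F K).mapMatrix ((x : Matrix (Fin 2) (Fin 2) F) ^ (2 ^ (m - 2)))) i j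
        = ((algebraMap F K).mapMatrix (-1 : Matrix (Fin 2) (Fin 2) F)) i j := by
      rw [hmappow]
    simpa [RingHom.mapMatrix_apply, Matrix.map_apply] using h2
  -- u ^ 2 = -1
  have hvalneg : ((-1 : GL (Fin 2) F) : Matrix (Fin 2) (Fin 2) F) = -1 := by
    simp
  have hu2 : u ^ 2 = (-1 : GL (Fin 2) F) := by
    apply Units.ext
    rw [hu_def, ← pow_mul]
    have : ((x ^ (2 ^ (m - 3) * 2) : GL (Fin 2) F) : Matrix (Fin 2) (Fin 2) F)
        = (x : Matrix (Fin 2) (Fin 2) F) ^ (2 ^ (m - 3) * 2) := Units.val_pow_eq_pow_val x _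
    rw [this, show 2 ^ (m - 3) * 2 = 2 ^ (m - 2) by rw [← pow_succ]; congr 1; omega,
      hxN, hvalneg]
  -- the span representation of u
  have hxsq : (x : Matrix (Fin 2) (Fin 2) F) * (x : Matrix (Fin 2) (Fin 2) F)
      = a • (x : Matrix (Fin 2) (Fin 2) F) + 1 := by
    rw [hx]
    ext i j
    fin_cases i <;> fin_cases j <;>
      simp [Matrix.mul_apply, Fin.sum_univ_succ, Matrix.one_apply] <;> ring
  have hspan : ∀ n : ℕ, ∃ α β : F, (x : Matrix (Fin 2) (Fin 2) F) ^ n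
      = α • 1 + β • (x : Matrix (Fin 2) (Fin 2) F) := by
    intro n
    induction n with
    | zero => exact ⟨1, 0, by simp⟩
    | succ k ih =>
      obtain ⟨α, β, hαβ⟩ := ih
      refine ⟨β, α + β * a, ?_⟩
      rw [pow_succ, hαβ, add_mul, smul_mul_assoc, smul_mul_assoc, one_mul, hxsq]
      ext i j
      simp [Matrix.add_apply, Matrix.smul_apply]
      ring
  obtain ⟨α, β, hαβ⟩ := hspan (2 ^ (m - 3))
  have huM : (u : Matrix (Fin 2) (Fin 2) F) = !![α, β; β, α + β * a] := by
    rw [hu_def, Units.val_pow_eq_pow_val, hαβ, hx]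
    ext i j
    fin_cases i <;> fin_cases j <;>
      simp [Matrix.add_apply, Matrix.smul_apply, Matrix.one_apply] <;> ring
  -- entry equations from u^2 = -1
  have hM2 : (!![α, β; β, α + β * a] : Matrix (Fin 2) (Fin 2) F) * !![α, β; β, α + β * a]
      = -1 := by
    rw [← huM]
    have : (u : Matrix (Fin 2) (Fin 2) F) * (u : Matrix (Fin 2) (Fin 2) F)
        = ((u * u : GL (Fin 2) F) : Matrix (Fin 2) (Fin 2) F) := rfl
    rw [this, ← sq, hu2, hvalneg]
  have h00 : α * α + β * β = -1 := by
    have h := congrFun (congrFun hM2 0) 0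
    simpa [Matrix.mul_apply, Fin.sum_univ_succ, Matrix.one_apply] using h
  have h01 : α * β + β * (α + β * a) = 0 := by
    have h := congrFun (congrFun hM2 0) 1
    simpa [Matrix.mul_apply, Fin.sum_univ_succ, Matrix.one_apply] using h
  have hβ : β ≠ 0 := by
    intro h
    exact hns ⟨α, by rw [h] at h00; linear_combination -h00⟩
  have htr : 2 * α + β * a = 0 := by
    have h : β * (2 * α + β * a) = 0 := by linear_combination h01
    rcases mul_eq_zero.mp h with h | h
    · exact absurd h hβ
    · exact h
  -- v as a matrix
  have hV : (v : Matrix (Fin 2) (Fin 2) F) = !![a, 1 + a * a; -1, -a] := by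
    rw [hv_def, Units.val_mul, ht, hx]
    ext i j
    fin_cases i <;> fin_cases j <;>
      simp [Matrix.mul_apply, Fin.sum_univ_succ] <;> ring
  have hv2 : v ^ 2 = (-1 : GL (Fin 2) F) := by
    apply Units.ext
    rw [sq, Units.val_mul, hV, hvalneg]
    ext i j
    fin_cases i <;> fin_cases j <;>
      simp [Matrix.mul_apply, Fin.sum_univ_succ, Matrix.one_apply] <;> ring
  -- orders
  have hneg1 : (-1 : GL (Fin 2) F) ≠ 1 := by
    intro h
    have := congrArg (fun w : GL (Fin 2) F => (w : Matrix (Fin 2) (Fin 2) F) 0 0) h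
    simp at this
    exact hm1F (by simpa using this)
  have horder4 : ∀ w : GL (Fin 2) F, w ^ 2 = -1 → orderOf w = 4 := by
    intro w hw
    have h1 : w ^ 2 ^ 1 ≠ 1 := by rw [pow_one, hw]; exact hneg1
    have h2 : w ^ 2 ^ (1 + 1) = 1 := by
      rw [show (2 : ℕ) ^ (1 + 1) = 2 * 2 from rfl, pow_mul, hw]
      ext i j
      simp
    have := orderOf_eq_prime_pow h1 h2
    rw [this]
    norm_num
  have hou : orderOf u = 4 := horder4 u hu2
  have hov : orderOf v = 4 := horder4 v hv2
  -- unit-level relations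
  have huinv : u⁻¹ = -u := by
    symm
    apply eq_inv_of_mul_eq_one_right
    rw [mul_neg, ← sq, hu2, neg_neg]
  have hu3 : u ^ 3 = -u := by
    rw [pow_succ, hu2, neg_one_mul]
  have hvv : v * v = u * u := by
    rw [← sq, ← sq, hu2, hv2]
  have hMV : (u : Matrix (Fin 2) (Fin 2) F) * (v : Matrix (Fin 2) (Fin 2) F)
      = -((v : Matrix (Fin 2) (Fin 2) F) * (u : Matrix (Fin 2) (Fin 2) F)) := by
    rw [huM, hV]
    ext i j
    fin_cases i <;> fin_cases j <;>
      simp [Matrix.mul_apply, Fin.sum_univ_succ, Matrix.neg_apply] <;>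
      first
        | ring1
        | linear_combination a * htr
        | linear_combination (-a) * htr
        | linear_combination (1 + a * a) * htr
        | linear_combination (-(1 + a * a)) * htr
        | linear_combination htr
        | linear_combination (-1 : F) * htr
        | linear_combination (2 : F) * htr
        | linear_combination (-2 : F) * htr
        | linear_combination (2 * a) * htr
        | linear_combination (-2 * a) * htr
        | linear_combination (a + a * a * a) * htr
        | linear_combination (-(a + a * a * a)) * htr
  have huv : u * v = v * u ^ 3 := by
    rw [hu3, mul_neg]
    apply Units.ext
    rw [Units.val_mul, Units.val_neg, Units.val_mul]
    exact hMV
  -- inequalities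
  have hv1 : v ≠ 1 := by
    intro h
    have hmat := congrArg Units.val h
    rw [hV, Units.val_one] at hmat
    have := congrFun (congrFun hmat 1) 0
    simp [Matrix.one_apply] at this
  have hvn1 : v ≠ -1 := by
    intro h
    have hmat := congrArg Units.val h
    rw [hV, Units.val_neg, Units.val_one] at hmat
    have := congrFun (congrFun hmat 1) 0
    simp [Matrix.one_apply, Matrix.neg_apply] at this
  have hvu : v ≠ u := by
    intro h
    have hmat := congrArg Units.val h
    rw [hV, huM] at hmat
    have e00 : a = α := by simpa using congrFun (congrFun hmat 0) 0
    have e01 : 1 + a * a = β := by simpa using congrFun (congrFun hmat 0) 1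
    have e10 : (-1 : F) = β := by simpa using congrFun (congrFun hmat 1) 0
    have e11 : -a = α + β * a := by simpa using congrFun (congrFun hmat 1) 1
    have ha2 : a * a = -2 := by linear_combination e01 - e10
    have ha0 : a = 0 := by linear_combination e00 - e11 + a * e10
    exact h2F (by linear_combination ha2 - a * ha0)
  have hvnu : v ≠ -u := by
    intro h
    have hmat := congrArg Units.val h
    rw [Units.val_neg, hV, huM] at hmat
    have e00 : a = -α := by simpa using congrFun (congrFun hmat 0) 0
    have e01 : 1 + a * a = -β := by simpa using congrFun (congrFun hmat 0) 1
    have e10 : (-1 : F) = -β := by simpa using congrFun (congrFun hmat 1) 0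
    have e11 : -a = -(α + β * a) := by simpa using congrFun (congrFun hmat 1) 1
    have ha2 : a * a = -2 := by linear_combination e01 - e10
    have ha0 : a = 0 := by linear_combination e00 - e11 + a * e10
    exact h2F (by linear_combination ha2 - a * ha0)
  -- the homomorphism from the quaternion group
  haveI : NeZero (2 * 2 : ℕ) := ⟨by norm_num⟩
  set ψ : QuaternionGroup 2 →* GL (Fin 2) F := quatHom u v hou huv hvv with hψ
  have hψa : ∀ i : ZMod (2 * 2), ψ (QuaternionGroup.a i) = u ^ i.val := fun i => rfl
  have hψxa : ∀ i : ZMod (2 * 2), ψ (QuaternionGroup.xa i) = v * u ^ i.val := fun i => rfl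
  have hinj : Function.Injective ψ := by
    rw [injective_iff_map_eq_one]
    rintro (i | i) h
    · rw [hψa] at h
      have hd := orderOf_dvd_of_pow_eq_one h
      rw [hou] at hd
      have hlt : i.val < 2 * 2 := ZMod.val_lt i
      have : i.val = 0 := by omega
      rw [QuaternionGroup.one_def, show i = 0 from (ZMod.val_eq_zero i).mp this]
    · exfalso
      rw [hψxa] at h
      have hlt : i.val < 2 * 2 := ZMod.val_lt i
      interval_cases hi : i.val
      · rw [pow_zero, mul_one] at h
        exact hv1 h
      · rw [pow_one] at h
        have : v = u⁻¹ := eq_inv_of_mul_eq_one_left h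
        rw [huinv] at this
        exact hvnu this
      · rw [hu2, mul_neg_one] at h
        have := congrArg (fun w : GL (Fin 2) F => -w) h
        simp only [neg_neg] at this
        exact hvn1 this
      · rw [hu3, mul_neg] at h
        have h' : v * u = -1 := by
          have := congrArg (fun w : GL (Fin 2) F => -w) h
          simpa [neg_neg] using this
        have : v = -1 * u⁻¹ := eq_mul_inv_of_mul_eq h'
        rw [huinv, neg_one_mul, neg_neg] at this
        exact hvu this
  have hsub : ∀ g : QuaternionGroup 2, ψ g ∈ Q := by
    rw [hQ]
    rintro (i | i)
    · rw [hψa]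
      exact pow_mem (Subgroup.subset_closure (Set.mem_insert _ _)) _
    · rw [hψxa]
      exact mul_mem (Subgroup.subset_closure (Set.mem_insert_of_mem _ rfl))
        (pow_mem (Subgroup.subset_closure (Set.mem_insert _ _)) _)
  have hQle : Q ≤ ψ.range := by
    rw [hQ]
    apply (Subgroup.closure_le _).mpr
    rintro w (rfl | rfl)
    · exact ⟨QuaternionGroup.a 1, by rw [hψa, show (1 : ZMod (2 * 2)).val = 1 from rfl, pow_one]⟩
    · exact ⟨QuaternionGroup.xa 0, by rw [hψxa, ZMod.val_zero, pow_zero, mul_one]⟩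
  have hrange : ψ.range = Q :=
    le_antisymm (by rintro w ⟨g, rfl⟩; exact hsub g) hQle
  have e : QuaternionGroup 2 ≃* Q :=
    (MonoidHom.ofInjective hinj).trans (MulEquiv.subgroupCongr hrange)
  have hcard : Nat.card Q = 8 := by
    rw [← Nat.card_congr e.toEquiv, Nat.card_eq_fintype_card, QuaternionGroup.card]
  -- conjugacy in G
  have hisconj : IsConj u v := by
    rw [isConj_iff]
    have hgdet : IsUnit (!![1, α; 0, β] : Matrix (Fin 2) (Fin 2) F).det := by
      rw [Matrix.det_fin_two_of]
      simpa [isUnit_iff_ne_zero] using hβ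
    have hgu : IsUnit (!![1, α; 0, β] : Matrix (Fin 2) (Fin 2) F) :=
      (Matrix.isUnit_iff_isUnit_det _).mpr hgdet
    have hCu : IsUnit (!![0, -1; 1, 0] : Matrix (Fin 2) (Fin 2) F) := by
      apply (Matrix.isUnit_iff_isUnit_det _).mpr
      rw [Matrix.det_fin_two_of]
      simp
    obtain ⟨gU, hgUval⟩ := hgu
    obtain ⟨CU, hCUval⟩ := hCu
    have hug : u * gU = gU * CU := by
      apply Units.ext
      show (u : Matrix (Fin 2) (Fin 2) F) * (gU : Matrix (Fin 2) (Fin 2) F)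
        = (gU : Matrix (Fin 2) (Fin 2) F) * (CU : Matrix (Fin 2) (Fin 2) F)
      rw [hgUval, hCUval, huM]
      ext i j
      fin_cases i <;> fin_cases j <;>
        simp [Matrix.mul_apply, Fin.sum_univ_succ] <;>
        first
          | ring1
          | linear_combination h00
          | linear_combination β * htr
          | linear_combination -h00
          | linear_combination (-β) * htr
    have hvt : v * t = t * CU := by
      apply Units.ext
      show (v : Matrix (Fin 2) (Fin 2) F) * (t : Matrix (Fin 2) (Fin 2) F)
        = (t : Matrix (Fin 2) (Fin 2) F) * (CU : Matrix (Fin 2) (Fin 2) F)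
      rw [hCUval, hV, ht]
      ext i j
      fin_cases i <;> fin_cases j <;>
        simp [Matrix.mul_apply, Fin.sum_univ_succ] <;> ring
    refine ⟨t * gU⁻¹, ?_⟩
    have hueq : u = gU * CU * gU⁻¹ := eq_mul_inv_iff_mul_eq.mpr hug
    have hveq : v = t * CU * t⁻¹ := eq_mul_inv_iff_mul_eq.mpr hvt
    rw [hueq, hveq]
    group
  -- not conjugate within P
  have hnotP : ¬ ∃ g ∈ P ⊓ Subgroup.normalizer (Q : Set (GL (Fin 2) F)), g * u * g⁻¹ = v := by
    rintro ⟨g, hg, hconj⟩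
    have hgP : g ∈ P := hg.1
    rw [hP] at hgP
    have htt : t * t = 1 := by
      apply Units.ext
      rw [Units.val_mul, ht, Units.val_one]
      ext i j
      fin_cases i <;> fin_cases j <;>
        simp [Matrix.mul_apply, Fin.sum_univ_succ, Matrix.one_apply]
    have htinv : t⁻¹ = t := (eq_inv_of_mul_eq_one_right htt).symm
    have htut : t * u * t⁻¹ = u⁻¹ := by
      rw [htinv, huinv]
      apply Units.ext
      rw [Units.val_mul, Units.val_mul, Units.val_neg, ht, huM]
      ext i j
      fin_cases i <;> fin_cases j <;>
        simp [Matrix.mul_apply, Fin.sum_univ_succ, Matrix.neg_apply] <;>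
        first
          | ring1
          | linear_combination htr
          | linear_combination -htr
    have hcomm : x * u * x⁻¹ = u := by
      have hco : Commute x u := (Commute.refl x).pow_right _
      rw [hco.eq]
      exact mul_inv_cancel_right u x
    have hclaim : ∀ w, w ∈ Subgroup.closure ({x, t} : Set (GL (Fin 2) F)) →
        w * u * w⁻¹ = u ∨ w * u * w⁻¹ = u⁻¹ := by
      intro w hw
      induction hw using Subgroup.closure_induction with
      | mem w hw =>
        rcases hw with rfl | rfl
        · exact Or.inl hcomm
        · exact Or.inr htut
      | one => left; group
      | mul w₁ w₂ hw₁ hw₂ ih₁ ih₂ =>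
        have key : w₁ * w₂ * u * (w₁ * w₂)⁻¹ = w₁ * (w₂ * u * w₂⁻¹) * w₁⁻¹ := by group
        rcases ih₂ with h2 | h2
        · rw [key, h2]
          exact ih₁
        · rw [key, h2]
          rcases ih₁ with h1 | h1
          · right
            calc w₁ * u⁻¹ * w₁⁻¹ = (w₁ * u * w₁⁻¹)⁻¹ := by group
              _ = u⁻¹ := by rw [h1]
          · left
            calc w₁ * u⁻¹ * w₁⁻¹ = (w₁ * u * w₁⁻¹)⁻¹ := by group
              _ = (u⁻¹)⁻¹ := by rw [h1]
              _ = u := inv_inv u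
      | inv w hw ih =>
        have hconjinv : ∀ (w' z : GL (Fin 2) F), w' * u * w'⁻¹ = z → w'⁻¹ * z * w' = u := by
          intro w' z hz
          rw [← hz]
          simp [mul_assoc]
        rcases ih with h1 | h1
        · left
          rw [inv_inv]
          exact hconjinv w u h1
        · right
          rw [inv_inv]
          have h2 : w⁻¹ * u⁻¹ * w = u := hconjinv w u⁻¹ h1
          have h3 := congrArg (·⁻¹) h2
          simp only [_root_.mul_inv_rev, inv_inv] at h3
          simpa [mul_assoc] using h3
    rcases hclaim g hgP with h | h
    · rw [hconj] at h
      exact hvu h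
    · rw [hconj] at h
      rw [huinv] at h
      exact hvnu h
  exact ⟨hou, hov, hcard, ⟨e.symm⟩, hisconj, hnotP⟩
end
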